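/- arXiv:2002.01388 — 2 statements merged into one kernel-verified Lean document; each statement's English description precedes it below -/
import Mathlib

section
/- Let G be a group and let T be a G-tree such that the G-action on T is minimal and nonelementary. If iota is an isometry of T that commutes with the G-action (that is, iota(gx) = g·iota(x) for every x in T and g in G), then iota is the identity. In particular, the center Z(G) of G lies in the kernel of the G-action on T. -/
noncomputable section

open Metric Set

universe u v

/-- A geodesic metric space: any two points are joined by an isometrically
parametrized segment. -/
def GeodesicSpace (Y : Type*) [MetricSpace Y] : Prop :=
  ∀ x y : Y, ∃ f : ℝ → Y, f 0 = x ∧ f (dist x y) = y ∧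
    ∀ s ∈ Set.Icc (0:ℝ) (dist x y), ∀ t ∈ Set.Icc (0:ℝ) (dist x y),
      dist (f s) (f t) = |s - t|

/-- Gromov hyperbolicity (four-point condition) with constant `δ`. -/
def GromovHyperbolic (Y : Type*) [MetricSpace Y] (δ : ℝ) : Prop :=
  ∀ x y z w : Y, dist x y + dist z w ≤ max (dist x z + dist y w) (dist x w + dist y z) + 2 * δ

/-- A Gromov hyperbolic geodesic metric space. -/
def HyperbolicGeodesicSpace (Y : Type*) [MetricSpace Y] : Prop :=
  GeodesicSpace Y ∧ ∃ δ : ℝ, 0 ≤ δ ∧ GromovHyperbolic Y δ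

/-- An isometric action `ρ` of `G` on `Y` is acylindrical if for every `R > 0` there are
`L > 0` and `N` such that for any two points at distance `> L`, at most `N` elements of `G`
move both points by less than `R`. -/
def IsAcylindrical {G : Type*} [Group G] {Y : Type*} [MetricSpace Y] (ρ : G →* (Y ≃ᵢ Y)) : Prop :=
  ∀ R : ℝ, 0 < R → ∃ L : ℝ, 0 < L ∧ ∃ N : ℕ, ∀ x y : Y, L < dist x y →
    ∃ s : Finset G, s.card ≤ N ∧
      ∀ g : G, dist x (ρ g x) < R → dist y (ρ g y) < R → g ∈ s

/-- A group is virtually cyclic if it has a cyclic subgroup of finite index. -/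
def VirtuallyCyclic (G : Type*) [Group G] : Prop :=
  ∃ H : Subgroup G, H.FiniteIndex ∧ IsCyclic ↥H

/-- A group is acylindrically hyperbolic if it is not virtually cyclic and admits an
acylindrical isometric action with unbounded orbits on a Gromov hyperbolic geodesic space
(this is equivalent to admitting a nonelementary acylindrical action on such a space). -/
def AcylindricallyHyperbolic (G : Type u) [Group G] : Prop :=
  ¬ VirtuallyCyclic G ∧
    ∃ (Y : Type u) (_ : MetricSpace Y) (ρ : G →* (Y ≃ᵢ Y)),
      HyperbolicGeodesicSpace Y ∧ IsAcylindrical ρ ∧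
      ∃ y : Y, ¬ Bornology.IsBounded (Set.range fun g : G => ρ g y)

/-- The metric segment between `x` and `y`; in a real tree this is the unique arc
joining `x` to `y`. -/
def seg {T : Type*} [MetricSpace T] (x y : T) : Set T :=
  {z : T | dist x z + dist z y = dist x y}

/-- `A` is a (parametrized) arc from `x` to `y`. -/
def IsArcBetween {T : Type*} [MetricSpace T] (x y : T) (A : Set T) : Prop :=
  ∃ f : ℝ → T, ContinuousOn f (Set.Icc 0 1) ∧ Set.InjOn f (Set.Icc 0 1) ∧
    f 0 = x ∧ f 1 = y ∧ A = f '' Set.Icc 0 1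

/-- A real tree: a geodesic metric space in which every pair of points is joined by a
unique arc. -/
def IsRealTree (T : Type*) [MetricSpace T] : Prop :=
  GeodesicSpace T ∧
    ∀ (x y : T) (A B : Set T), IsArcBetween x y A → IsArcBetween x y B → A = B

section TreeAction

variable {G : Type*} [Group G] {T : Type*} [MetricSpace T]

/-- Translation length of `g` for the action `ρ`. -/
def transLen (ρ : G →* (T ≃ᵢ T)) (g : G) : ℝ := ⨅ x : T, dist x (ρ g x)

/-- The characteristic set of `g`: the set of points minimally displaced by `g`.
For an elliptic element this is its fixed-point set, and for a loxodromic element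
this is its axis. -/
def charSet (ρ : G →* (T ≃ᵢ T)) (g : G) : Set T :=
  {x : T | dist x (ρ g x) = transLen ρ g}

/-- `g` is elliptic: it fixes a point. -/
def Elliptic (ρ : G →* (T ≃ᵢ T)) (g : G) : Prop := ∃ x : T, ρ g x = x

/-- `A` is an axis for `g`: an invariant isometric copy of `ℝ` on which `g` acts as a
nontrivial translation. -/
def IsAxis (ρ : G →* (T ≃ᵢ T)) (g : G) (A : Set T) : Prop :=
  (∃ f : ℝ → T, Isometry f ∧ Set.range f = A) ∧
  (∀ x : T, x ∈ A ↔ ρ g x ∈ A) ∧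
  ∃ τ : ℝ, 0 < τ ∧ ∀ x ∈ A, dist x (ρ g x) = τ

/-- `g` is loxodromic: it has an axis. (For a loxodromic element `g`, the axis coincides
with `charSet ρ g`.) -/
def Loxodromic (ρ : G →* (T ≃ᵢ T)) (g : G) : Prop := ∃ A : Set T, IsAxis ρ g A

/-- A subtree is a convex subset. -/
def IsSubtree {T' : Type*} [MetricSpace T'] (A : Set T') : Prop :=
  ∀ x ∈ A, ∀ y ∈ A, seg x y ⊆ A

/-- The action is minimal: there is no proper nonempty invariant subtree. -/
def MinimalTreeAction (ρ : G →* (T ≃ᵢ T)) : Prop :=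
  ∀ A : Set T, A.Nonempty → IsSubtree A → (∀ (g : G), ∀ x ∈ A, ρ g x ∈ A) → A = Set.univ

/-- The action is nonelementary: there are two loxodromic elements whose axes intersect
in a compact (possibly empty) set. -/
def NonelementaryTreeAction (ρ : G →* (T ≃ᵢ T)) : Prop :=
  ∃ g h : G, Loxodromic ρ g ∧ Loxodromic ρ h ∧
    IsCompact (charSet ρ g ∩ charSet ρ h)

end TreeAction


namespace RTAux

variable {T : Type*} [MetricSpace T]

lemma seg_comm (x y : T) : seg x y = seg y x := by
  ext z; simp only [seg, Set.mem_setOf_eq]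
  rw [dist_comm x z, dist_comm z y, dist_comm x y]; constructor <;> intro h <;> linarith

lemma left_mem_seg (x y : T) : x ∈ seg x y := by simp [seg]

lemma right_mem_seg (x y : T) : y ∈ seg x y := by simp [seg]

lemma mem_seg {x y z : T} (h : dist x z + dist z y = dist x y) : z ∈ seg x y := h

lemma seg_dist_left {x y z : T} (h : z ∈ seg x y) : dist z y = dist x y - dist x z := by
  have : dist x z + dist z y = dist x y := h
  linarith

/-- subsegment: if `b ∈ seg a c` then `seg b c ⊆ seg a c`. -/
lemma subseg_right {a b c : T} (h : b ∈ seg a c) : seg b c ⊆ seg a c := by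
  intro z hz
  have h1 : dist a b + dist b c = dist a c := h
  have h2 : dist b z + dist z c = dist b c := hz
  have h3 : dist a z ≤ dist a b + dist b z := dist_triangle a b z
  have h4 : dist a c ≤ dist a z + dist z c := dist_triangle a z c
  have : dist a z + dist z c = dist a c := by linarith
  exact this

lemma subseg_left {a b c : T} (h : b ∈ seg a c) : seg a b ⊆ seg a c := by
  rw [seg_comm a b, seg_comm a c]
  exact subseg_right (by rwa [seg_comm] at h)

lemma isom_mem_seg {x y z : T} (ι : T ≃ᵢ T) (h : z ∈ seg x y) : ι z ∈ seg (ι x) (ι y) := by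
  have h1 : dist x z + dist z y = dist x y := h
  show dist (ι x) (ι z) + dist (ι z) (ι y) = dist (ι x) (ι y)
  simp only [IsometryEquiv.dist_eq]; exact h1

/-- `F` is an isometric parametrization of length `L` from `x` to `y`. -/
def IsGeo (F : ℝ → T) (x y : T) (L : ℝ) : Prop :=
  F 0 = x ∧ F L = y ∧ ∀ s ∈ Set.Icc (0:ℝ) L, ∀ t ∈ Set.Icc (0:ℝ) L, dist (F s) (F t) = |s - t|

lemma IsGeo.dist_eq {F : ℝ → T} {x y L} (hL : 0 ≤ L) (h : IsGeo F x y L) : dist x y = L := by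
  obtain ⟨h0, h1, hd⟩ := h
  have := hd 0 ⟨le_refl _, hL⟩ L ⟨hL, le_refl _⟩
  rw [h0, h1] at this
  rw [this, abs_of_nonpos (by linarith)]; ring

lemma exists_geo (hG : GeodesicSpace T) (x y : T) : ∃ F : ℝ → T, IsGeo F x y (dist x y) := by
  obtain ⟨f, h0, h1, hd⟩ := hG x y
  exact ⟨f, h0, h1, hd⟩

/-- a shifted/restricted geodesic is a geodesic -/
lemma IsGeo.shift {F : ℝ → T} {x y L} (h : IsGeo F x y L) {a b : ℝ} (ha : 0 ≤ a) (hab : a ≤ b)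
    (hb : b ≤ L) : IsGeo (fun u => F (a + u)) (F a) (F b) (b - a) := by
  obtain ⟨-, -, hd⟩ := h
  refine ⟨by simp, by simp, fun s hs t ht => ?_⟩
  rw [hd (a + s) ⟨by linarith [hs.1], by linarith [hs.2]⟩ (a + t)
    ⟨by linarith [ht.1], by linarith [ht.2]⟩]
  congr 1; ring

/-- an injective continuous param on `[0,L]`, `L > 0`, gives an arc. -/
lemma arc_of_param {H : ℝ → T} {L : ℝ} (hL : 0 < L)
    (hcont : ContinuousOn H (Set.Icc 0 L)) (hinj : Set.InjOn H (Set.Icc 0 L)) :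
    IsArcBetween (H 0) (H L) (H '' Set.Icc 0 L) := by
  have himg : (fun t : ℝ => L * t) '' Set.Icc (0:ℝ) 1 = Set.Icc 0 L := by
    rw [show Set.Icc (0:ℝ) L = Set.Icc (L*0) (L*1) by norm_num]
    exact (Set.image_mul_left_Icc' hL 0 1 ▸ rfl)
  have hmaps : Set.MapsTo (fun t : ℝ => L * t) (Set.Icc 0 1) (Set.Icc 0 L) := by
    intro t ht; rw [← himg]; exact Set.mem_image_of_mem _ ht
  refine ⟨fun t => H (L * t), ?_, ?_, by simp, by simp, ?_⟩
  · exact hcont.comp ((continuous_const.mul continuous_id).continuousOn) hmaps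
  · intro s hs t ht hst
    have := hinj (hmaps hs) (hmaps ht) hst
    exact mul_left_cancel₀ hL.ne' this
  · rw [← himg, ← Set.image_comp]; rfl

lemma IsGeo.continuousOn {F : ℝ → T} {x y L} (h : IsGeo F x y L) :
    ContinuousOn F (Set.Icc 0 L) := by
  have : LipschitzOnWith 1 F (Set.Icc 0 L) := by
    apply LipschitzOnWith.of_dist_le_mul
    intro s hs t ht
    rw [h.2.2 s hs t ht]; simp [Real.dist_eq]
  exact this.continuousOn

lemma IsGeo.injOn {F : ℝ → T} {x y L} (h : IsGeo F x y L) : Set.InjOn F (Set.Icc 0 L) := by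
  intro s hs t ht hst
  have := h.2.2 s hs t ht
  rw [hst, dist_self] at this
  have : s - t = 0 := by rwa [eq_comm, abs_eq_zero] at this
  linarith

lemma IsGeo.arc {F : ℝ → T} {x y L} (hL : 0 < L) (h : IsGeo F x y L) :
    IsArcBetween x y (F '' Set.Icc 0 L) := by
  have := arc_of_param hL h.continuousOn h.injOn
  rwa [h.1, h.2.1] at this

/-- concatenation of two geodesics whose lengths add up. -/
lemma geo_concat {F₁ F₂ : ℝ → T} {x z y : T} {d₁ d₂ : ℝ}
    (h1 : IsGeo F₁ x z d₁) (h2 : IsGeo F₂ z y d₂) (hd1 : 0 ≤ d₁) (hd2 : 0 ≤ d₂)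
    (hsum : d₁ + d₂ = dist x y) :
    IsGeo (fun u => if u ≤ d₁ then F₁ u else F₂ (u - d₁)) x y (d₁ + d₂) := by
  set F := fun u => if u ≤ d₁ then F₁ u else F₂ (u - d₁) with hF
  have hF0 : F 0 = x := by simp [hF, hd1, h1.1]
  have hFd : ∀ u, 0 ≤ u → u ≤ d₁ → F u = F₁ u := fun u _ hu => by simp [hF, hu]
  have hFd2 : ∀ u, d₁ ≤ u → F u = F₂ (u - d₁) := by
    intro u hu
    rcases eq_or_lt_of_le hu with h | h
    · simp [hF, ← h, h1.2.1, h2.1]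
    · simp [hF, not_le.mpr h]
  -- key cross estimate
  have cross : ∀ s, 0 ≤ s → s ≤ d₁ → ∀ t, d₁ ≤ t → t ≤ d₁ + d₂ →
      dist (F₁ s) (F₂ (t - d₁)) = t - s := by
    intro s hs0 hs1 t ht0 ht1
    have hub : dist (F₁ s) (F₂ (t - d₁)) ≤ t - s := by
      calc dist (F₁ s) (F₂ (t - d₁)) ≤ dist (F₁ s) z + dist z (F₂ (t - d₁)) := dist_triangle _ _ _
        _ = dist (F₁ s) (F₁ d₁) + dist (F₂ 0) (F₂ (t - d₁)) := by rw [h1.2.1, h2.1]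
        _ = |s - d₁| + |0 - (t - d₁)| := by
            rw [h1.2.2 s ⟨hs0, hs1⟩ d₁ ⟨hd1, le_refl _⟩,
              h2.2.2 0 ⟨le_refl _, hd2⟩ (t - d₁) ⟨by linarith, by linarith⟩]
        _ = t - s := by
            rw [abs_of_nonpos (by linarith), abs_of_nonpos (by linarith)]; ring
    have hlb : t - s ≤ dist (F₁ s) (F₂ (t - d₁)) := by
      have h1' : dist x (F₁ s) = s := by
        have := h1.2.2 0 ⟨le_refl _, hd1⟩ s ⟨hs0, hs1⟩
        rw [h1.1] at this; rw [this, abs_of_nonpos (by linarith)]; ring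
      have h2' : dist (F₂ (t - d₁)) y = d₁ + d₂ - t := by
        have := h2.2.2 (t - d₁) ⟨by linarith, by linarith⟩ d₂ ⟨hd2, le_refl _⟩
        rw [h2.2.1] at this; rw [this, abs_of_nonpos (by linarith)]; ring
      have htri : dist x y ≤ dist x (F₁ s) + dist (F₁ s) (F₂ (t - d₁)) + dist (F₂ (t - d₁)) y :=
        dist_triangle4 x (F₁ s) (F₂ (t - d₁)) y
      rw [← hsum] at htri; linarith [htri, h1', h2']
    linarith
  refine ⟨hF0, by rw [hFd2 (d₁ + d₂) (by linarith)]; simpa using h2.2.1, ?_⟩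
  intro s hs t ht
  rcases le_or_gt s t with hst | hst
  · rcases le_or_gt t d₁ with h | h
    · rw [hFd s hs.1 (le_trans hst h), hFd t ht.1 h,
        h1.2.2 s ⟨hs.1, le_trans hst h⟩ t ⟨ht.1, h⟩]
    · rcases le_or_gt s d₁ with h' | h'
      · rw [hFd s hs.1 h', hFd2 t h.le, cross s hs.1 h' t h.le ht.2,
          abs_of_nonpos (by linarith)]
        ring
      · rw [hFd2 s h'.le, hFd2 t h.le,
          h2.2.2 (s - d₁) ⟨by linarith, by linarith [hs.2]⟩ (t - d₁) ⟨by linarith, by linarith [ht.2]⟩]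
        congr 1; ring
  · rcases le_or_gt s d₁ with h | h
    · rw [hFd s hs.1 h, hFd t ht.1 (le_trans hst.le h),
        h1.2.2 s ⟨hs.1, h⟩ t ⟨ht.1, le_trans hst.le h⟩]
    · rcases le_or_gt t d₁ with h' | h'
      · rw [hFd t ht.1 h', hFd2 s h.le, dist_comm, cross t ht.1 h' s h.le hs.2,
          abs_of_nonneg (by linarith)]
      · rw [hFd2 s h.le, hFd2 t h'.le,
          h2.2.2 (s - d₁) ⟨by linarith, by linarith [hs.2]⟩ (t - d₁) ⟨by linarith, by linarith [ht.2]⟩]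
        congr 1; ring


/-- In a real tree, the metric segment equals the image of any geodesic parametrization. -/
lemma seg_eq_geo_image (hT : IsRealTree T) {F : ℝ → T} {x y : T} {L : ℝ} (hL : 0 ≤ L)
    (hF : IsGeo F x y L) : seg x y = F '' Set.Icc 0 L := by
  have hLd : dist x y = L := hF.dist_eq hL
  apply Set.Subset.antisymm
  · intro z hz
    have hz' : dist x z + dist z y = dist x y := hz
    rcases eq_or_lt_of_le hL with h0 | h0
    · -- degenerate
      have hx : dist x z = 0 := by
        have h1 : dist x y = 0 := by rw [hLd, ← h0]
        have := dist_nonneg (x := x) (y := z); have := dist_nonneg (x := z) (y := y); linarith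
      have : z = x := by rw [dist_comm] at hx; exact dist_eq_zero.mp hx
      exact ⟨0, ⟨le_refl _, hL⟩, by rw [hF.1, this]⟩
    · -- build concatenated geodesic through z
      obtain ⟨F₁, hF₁⟩ := exists_geo hT.1 x z
      obtain ⟨F₂, hF₂⟩ := exists_geo hT.1 z y
      have hsum : dist x z + dist z y = dist x y := hz'
      have hcon := geo_concat hF₁ hF₂ dist_nonneg dist_nonneg hsum
      have hLL : dist x z + dist z y = L := by rw [hsum, hLd]
      have harc1 := hF.arc (by linarith) 
      have harc2 : IsArcBetween x y ((fun u => if u ≤ dist x z then F₁ u else F₂ (u - dist x z)) ''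
          Set.Icc 0 (dist x z + dist z y)) := hcon.arc (by rw [hLL]; linarith)
      have heq := hT.2 x y _ _ harc2 harc1
      have hzmem : z ∈ (fun u => if u ≤ dist x z then F₁ u else F₂ (u - dist x z)) ''
          Set.Icc 0 (dist x z + dist z y) := by
        refine ⟨dist x z, ⟨dist_nonneg, by linarith [dist_nonneg (x := z) (y := y)]⟩, ?_⟩
        simp [hF₁.2.1]
      rw [heq] at hzmem
      exact hzmem
  · rintro z ⟨t, ht, rfl⟩
    have h1 : dist x (F t) = t := by
      have := hF.2.2 0 ⟨le_refl _, hL⟩ t ht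
      rw [hF.1] at this; rw [this, abs_of_nonpos (by linarith [ht.1])]; ring
    have h2 : dist (F t) y = L - t := by
      have := hF.2.2 t ht L ⟨hL, le_refl _⟩
      rw [hF.2.1] at this; rw [this, abs_of_nonpos (by linarith [ht.2])]; ring
    show dist x (F t) + dist (F t) y = dist x y
    rw [h1, h2, hLd]; ring

/-- two points on a segment: distance is difference of distances to an endpoint. -/
lemma seg_dist (hT : IsRealTree T) {x y z w : T} (hz : z ∈ seg x y) (hw : w ∈ seg x y) :
    dist z w = |dist x z - dist x w| := by
  obtain ⟨F, hF⟩ := exists_geo hT.1 x y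
  have hseg := seg_eq_geo_image hT dist_nonneg hF
  rw [hseg] at hz hw
  obtain ⟨s, hs, rfl⟩ := hz
  obtain ⟨t, ht, rfl⟩ := hw
  have h1 : dist x (F s) = s := by
    have := hF.2.2 0 ⟨le_refl _, dist_nonneg⟩ s hs
    rw [hF.1] at this; rw [this, abs_of_nonpos (by linarith [hs.1])]; ring
  have h2 : dist x (F t) = t := by
    have := hF.2.2 0 ⟨le_refl _, dist_nonneg⟩ t ht
    rw [hF.1] at this; rw [this, abs_of_nonpos (by linarith [ht.1])]; ring
  rw [h1, h2, hF.2.2 s hs t ht]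

/-- unique point at a given distance on a segment -/
lemma seg_unique_pt (hT : IsRealTree T) {x y z w : T} (hz : z ∈ seg x y) (hw : w ∈ seg x y)
    (hd : dist x z = dist x w) : z = w := by
  have := seg_dist hT hz hw
  rw [hd, sub_self, abs_zero] at this
  exact dist_eq_zero.mp this

lemma mem_seg_of_le (hT : IsRealTree T) {x y z w : T} (hz : z ∈ seg x y) (hw : w ∈ seg x y)
    (hd : dist x z ≤ dist x w) : z ∈ seg x w := by
  have h := seg_dist hT hz hw
  rw [abs_of_nonpos (by linarith)] at h
  show dist x z + dist z w = dist x w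
  rw [h]; ring


lemma IsGeo.dist_left {F : ℝ → T} {x y : T} {L : ℝ} (h : IsGeo F x y L) {t : ℝ}
    (ht : t ∈ Set.Icc 0 L) : dist x (F t) = t := by
  have := h.2.2 0 ⟨le_refl _, le_trans ht.1 ht.2⟩ t ht
  rw [h.1] at this; rw [this, abs_of_nonpos (by linarith [ht.1])]; ring

lemma IsGeo.dist_right {F : ℝ → T} {x y : T} {L : ℝ} (h : IsGeo F x y L) {t : ℝ}
    (ht : t ∈ Set.Icc 0 L) : dist (F t) y = L - t := by
  have := h.2.2 t ht L ⟨le_trans ht.1 ht.2, le_refl _⟩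
  rw [h.2.1] at this; rw [this, abs_of_nonpos (by linarith [ht.2])]; ring

/-- Median point existence in a real tree. -/
lemma median (hT : IsRealTree T) (x y k : T) :
    ∃ w, w ∈ seg x y ∧ w ∈ seg x k ∧ w ∈ seg k y := by
  by_cases hky : k = y
  · subst hky; exact ⟨k, right_mem_seg x k, right_mem_seg x k, left_mem_seg k k⟩
  obtain ⟨F₁, hF₁⟩ := exists_geo hT.1 x k
  obtain ⟨F₂, hF₂⟩ := exists_geo hT.1 x y
  set dk := dist x k with hdk
  set dy := dist x y with hdy
  have hdk0 : 0 ≤ dk := dist_nonneg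
  have hdy0 : 0 ≤ dy := dist_nonneg
  set m := min dk dy with hm
  set S := {t : ℝ | t ∈ Set.Icc 0 m ∧ F₁ t = F₂ t} with hS
  have hS0 : (0:ℝ) ∈ S := ⟨⟨le_refl _, le_min hdk0 hdy0⟩, by rw [hF₁.1, hF₂.1]⟩
  have hSne : S.Nonempty := ⟨0, hS0⟩
  have hSbdd : BddAbove S := ⟨m, fun t ht => ht.1.2⟩
  set a := sSup S with ha
  have ha0 : 0 ≤ a := le_csSup hSbdd hS0
  have ham : a ≤ m := csSup_le hSne (fun t ht => ht.1.2)
  have hadk : a ≤ dk := le_trans ham (min_le_left _ _)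
  have hady : a ≤ dy := le_trans ham (min_le_right _ _)
  have haS : F₁ a = F₂ a := by
    rw [← dist_eq_zero]
    by_contra hne
    have hpos : 0 < dist (F₁ a) (F₂ a) := lt_of_le_of_ne dist_nonneg (Ne.symm hne)
    obtain ⟨t, htS, hta⟩ := exists_lt_of_lt_csSup hSne
      (show a - dist (F₁ a) (F₂ a) / 3 < a by linarith)
    have h1 : dist (F₁ a) (F₁ t) = |a - t| := hF₁.2.2 a ⟨ha0, hadk⟩ t
      ⟨htS.1.1, le_trans htS.1.2 (min_le_left _ _)⟩
    have h2 : dist (F₂ t) (F₂ a) = |t - a| := hF₂.2.2 t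
      ⟨htS.1.1, le_trans htS.1.2 (min_le_right _ _)⟩ a ⟨ha0, hady⟩
    have hta' : t ≤ a := le_csSup hSbdd htS
    have htri := dist_triangle (F₁ a) (F₁ t) (F₂ a)
    rw [h1, abs_of_nonneg (by linarith)] at htri
    rw [htS.2, h2, abs_of_nonpos (by linarith)] at htri
    linarith
  refine ⟨F₁ a, ?_, ?_, ?_⟩
  · rw [seg_eq_geo_image hT hdy0 hF₂, haS]; exact ⟨a, ⟨ha0, hady⟩, rfl⟩
  · rw [seg_eq_geo_image hT hdk0 hF₁]; exact ⟨a, ⟨ha0, hadk⟩, rfl⟩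
  rcases eq_or_lt_of_le hadk with hak | hak
  · have hw : F₁ a = k := by rw [hak, hF₁.2.1]
    rw [hw]; exact left_mem_seg k y
  rcases eq_or_lt_of_le hady with hay | hay
  · have hw : F₁ a = y := by rw [haS, hay, hF₂.2.1]
    rw [hw]; exact right_mem_seg k y
  -- claim 1: beyond a the two geodesics are disjoint
  have claim1 : ∀ s, a < s → s ≤ dk → ∀ t, a < t → t ≤ dy → F₁ s ≠ F₂ t := by
    intro s has hsdk t hat htdy heq
    have hst : s = t := by
      have h1 : dist x (F₁ s) = s := hF₁.dist_left ⟨by linarith, hsdk⟩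
      have h2 : dist x (F₂ t) = t := hF₂.dist_left ⟨by linarith, htdy⟩
      rw [heq, h2] at h1; exact h1.symm
    have heq' : F₁ s = F₂ s := by rw [heq, hst]
    have hsdy : s ≤ dy := by rw [hst]; exact htdy
    have hshift1 := hF₁.shift ha0 has.le hsdk
    have hshift2 := hF₂.shift ha0 has.le hsdy
    have harc1 := hshift1.arc (by linarith)
    have harc2 := hshift2.arc (by linarith)
    rw [haS, heq'] at harc1
    have himg := hT.2 _ _ _ _ harc1 harc2
    have hmem : F₁ ((a + s)/2) ∈ (fun u => F₁ (a + u)) '' Set.Icc 0 (s - a) :=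
      ⟨(s - a)/2, ⟨by linarith, by linarith⟩, by
        show F₁ (a + (s - a)/2) = F₁ ((a + s)/2); congr 1; ring⟩
    rw [himg] at hmem
    obtain ⟨u, hu, hu2⟩ := hmem
    have hau : a + u ∈ Set.Icc (0:ℝ) dy := ⟨by linarith [hu.1], by linarith [hu.2]⟩
    have huval : a + u = (a + s)/2 := by
      have e1 : dist x (F₂ (a + u)) = a + u := hF₂.dist_left hau
      have e2 : dist x (F₁ ((a + s)/2)) = (a + s)/2 :=
        hF₁.dist_left ⟨by linarith, by linarith⟩
      rw [show F₂ (a + u) = F₁ ((a+s)/2) from hu2, e2] at e1; exact e1.symm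
    have hmemS : (a + s)/2 ∈ S := by
      refine ⟨⟨by linarith, le_min (by linarith) (by linarith)⟩, ?_⟩
      rw [← (show F₂ (a + u) = F₁ ((a+s)/2) from hu2), huval]
    have := le_csSup hSbdd hmemS
    linarith
  -- concatenated arc from k to y through F₁ a
  set L' := (dk - a) + (dy - a) with hL'
  have hL'pos : 0 < L' := by simp only [hL']; linarith
  set G := fun u => if u ≤ dk - a then F₁ (dk - u) else F₂ (u - (dk - a) + a) with hG
  have hG0 : G 0 = k := by
    simp only [hG, if_pos (show (0:ℝ) ≤ dk - a by linarith), sub_zero, hF₁.2.1]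
  have hGL : G L' = y := by
    have hc : ¬ (L' ≤ dk - a) := by simp only [hL']; push_neg; linarith
    simp only [hG, if_neg hc, hL']
    rw [show (dk - a) + (dy - a) - (dk - a) + a = dy by ring, hF₂.2.1]
    exact if_neg (by push_neg; linarith)
  have hparam1 : ∀ u, 0 ≤ u → u ≤ dk - a → dk - u ∈ Set.Icc 0 dk := by
    intro u h1 h2; exact ⟨by linarith, by linarith⟩
  have hparam2 : ∀ u, dk - a ≤ u → u ≤ L' → u - (dk - a) + a ∈ Set.Icc 0 dy := by
    intro u h1 h2; constructor
    · linarith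
    · simp only [hL'] at h2; linarith
  have hlip : ∀ u ∈ Set.Icc 0 L', ∀ v ∈ Set.Icc 0 L', u ≤ v → dist (G u) (G v) ≤ v - u := by
    intro u hu v hv huv
    rcases le_or_gt v (dk - a) with hv1 | hv1
    · have hu1 : u ≤ dk - a := le_trans huv hv1
      simp only [hG, if_pos hu1, if_pos hv1]
      rw [hF₁.2.2 _ (hparam1 u hu.1 hu1) _ (hparam1 v hv.1 hv1)]
      rw [abs_of_nonneg (by linarith)]; linarith
    · rcases le_or_gt u (dk - a) with hu1 | hu1
      · simp only [hG, if_pos hu1, if_neg (not_le.mpr hv1)]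
        calc dist (F₁ (dk - u)) (F₂ (v - (dk - a) + a))
            ≤ dist (F₁ (dk - u)) (F₁ a) + dist (F₁ a) (F₂ (v - (dk - a) + a)) :=
              dist_triangle _ _ _
          _ = |dk - u - a| + dist (F₂ a) (F₂ (v - (dk - a) + a)) := by
              rw [hF₁.2.2 _ (hparam1 u hu.1 hu1) a ⟨ha0, hadk⟩, haS]
          _ = |dk - u - a| + |a - (v - (dk - a) + a)| := by
              rw [hF₂.2.2 a ⟨ha0, hady⟩ _ (hparam2 v hv1.le hv.2)]
          _ ≤ v - u := by
              rw [abs_of_nonneg (by linarith), abs_of_nonpos (by linarith)]; linarith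
      · simp only [hG, if_neg (not_le.mpr hu1), if_neg (not_le.mpr hv1)]
        rw [hF₂.2.2 _ (hparam2 u hu1.le hu.2) _ (hparam2 v hv1.le hv.2)]
        rw [abs_of_nonpos (by linarith)]; linarith
  have hcont : ContinuousOn G (Set.Icc 0 L') := by
    have hl : LipschitzOnWith 1 G (Set.Icc 0 L') := by
      apply LipschitzOnWith.of_dist_le_mul
      intro u hu v hv
      rcases le_total u v with h | h
      · calc dist (G u) (G v) ≤ v - u := hlip u hu v hv h
          _ ≤ 1 * dist u v := by
              rw [one_mul, Real.dist_eq, abs_of_nonpos (by linarith)]; linarith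
      · rw [dist_comm]
        calc dist (G v) (G u) ≤ u - v := hlip v hv u hu h
          _ ≤ 1 * dist u v := by
              rw [one_mul, Real.dist_eq, abs_of_nonneg (by linarith)]
    exact hl.continuousOn
  have hinj : Set.InjOn G (Set.Icc 0 L') := by
    have key : ∀ u ∈ Set.Icc 0 L', ∀ v ∈ Set.Icc 0 L', u < v → G u ≠ G v := by
      intro u hu v hv huv heq
      rcases le_or_gt v (dk - a) with hv1 | hv1
      · have hu1 : u ≤ dk - a := le_of_lt (lt_of_lt_of_le huv hv1)
        have hinj1 := hF₁.injOn (hparam1 u hu.1 hu1) (hparam1 v hv.1 hv1) (by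
          simpa only [hG, if_pos hu1, if_pos hv1] using heq)
        linarith
      · rcases le_or_gt u (dk - a) with hu1 | hu1
        · have heq2 : F₁ (dk - u) = F₂ (v - (dk - a) + a) := by
            simpa only [hG, if_pos hu1, if_neg (not_le.mpr hv1)] using heq
          rcases eq_or_lt_of_le hu1 with he | hlt'
          · have hdu : dk - u = a := by rw [he]; ring
            rw [hdu, haS] at heq2
            have hval := hF₂.injOn ⟨ha0, hady⟩ (hparam2 v hv1.le hv.2) heq2
            have : v = dk - a := by linarith
            linarith
          · exact claim1 (dk - u) (by linarith) (by linarith [hu.1]) _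
              (by linarith) (hparam2 v hv1.le hv.2).2 heq2
        · have hinj2 := hF₂.injOn (hparam2 u hu1.le hu.2) (hparam2 v hv1.le hv.2) (by
            simpa only [hG, if_neg (not_le.mpr hu1), if_neg (not_le.mpr hv1)] using heq)
          linarith
    intro u hu v hv heq
    rcases lt_trichotomy u v with h | h | h
    · exact absurd heq (key u hu v hv h)
    · exact h
    · exact absurd heq.symm (key v hv u hu h)
  have harc := arc_of_param hL'pos hcont hinj
  rw [hG0, hGL] at harc
  obtain ⟨F₃, hF₃⟩ := exists_geo hT.1 k y
  have harc3 := hF₃.arc (dist_pos.mpr hky)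
  have himg := hT.2 k y _ _ harc harc3
  have hwmem : F₁ a ∈ G '' Set.Icc 0 L' := by
    refine ⟨dk - a, ⟨by linarith, by simp only [hL']; linarith⟩, ?_⟩
    simp only [hG, if_pos (le_refl (dk - a)), show dk - (dk - a) = a by ring]
  rw [himg] at hwmem
  rw [seg_eq_geo_image hT dist_nonneg hF₃]
  exact hwmem

/-- chain lemma: two consecutive betweenness relations concatenate. -/
lemma chain (hT : IsRealTree T) {a b c d : T} (h1 : b ∈ seg a c) (h2 : c ∈ seg b d)
    (hbc : b ≠ c) : dist a d = dist a b + dist b c + dist c d ∧ b ∈ seg a d ∧ c ∈ seg a d := by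
  obtain ⟨w, hw1, hw2, hw3⟩ := median hT a d c
  -- hw1 : w ∈ seg a d, hw2 : w ∈ seg a c, hw3 : w ∈ seg c d
  have hw3' : w ∈ seg c d := hw3
  have hsub : seg c d ⊆ seg b d := subseg_right h2
  have hwbd : w ∈ seg b d := hsub hw3'
  set s := dist c w with hs
  have hs0 : 0 ≤ s := dist_nonneg
  have e1 : dist w d = dist c d - s := by
    have : dist c w + dist w d = dist c d := hw3'
    linarith
  have e2 : dist b c + dist c d = dist b d := h2
  have e3 : dist b w = dist b c + s := by
    have : dist b w + dist w d = dist b d := hwbd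
    linarith
  have e4 : dist b w = |dist a b - dist a w| := by
    have h1' : b ∈ seg a c := h1
    exact seg_dist hT h1' hw2
  have e5 : dist a w + dist w c = dist a c := hw2
  have e6 : dist a b + dist b c = dist a c := h1
  have hbc0 : 0 < dist b c := dist_pos.mpr hbc
  have hwc : dist w c = s := dist_comm w c ▸ rfl
  -- from e5,e6 : dist a w = dist a b + dist b c - s
  have e7 : dist a w = dist a b + dist b c - s := by
    rw [hwc] at e5; linarith
  rw [e7] at e4
  rw [e3] at e4
  -- dist b c + s = |s - dist b c|
  have e8 : dist b c + s = |s - dist b c| := by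
    rw [show dist a b - (dist a b + dist b c - s) = s - dist b c by ring] at e4
    exact e4
  have hs00 : s = 0 := by
    rcases le_or_gt s (dist b c) with h | h
    · rw [abs_of_nonpos (by linarith)] at e8; linarith
    · rw [abs_of_nonneg (by linarith)] at e8; linarith
  have hwc0 : w = c := by
    have : dist c w = 0 := by rw [← hs]; exact hs00
    exact (dist_eq_zero.mp this).symm
  have hcad : dist a w + dist w d = dist a d := hw1
  subst hwc0
  refine ⟨by linarith, ?_, hw1⟩
  show dist a b + dist b d = dist a d
  linarith

/-- segments inside a parametrized line -/
lemma line_seg (hT : IsRealTree T) {f : ℝ → T} (hf : Isometry f) {s t : ℝ} (hst : s ≤ t) :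
    seg (f s) (f t) = f '' Set.Icc s t := by
  have hgeo : IsGeo (fun u => f (s + u)) (f s) (f t) (t - s) := by
    refine ⟨by simp, by simp, fun u hu v hv => ?_⟩
    rw [hf.dist_eq]
    rw [Real.dist_eq, show s + u - (s + v) = u - v by ring]
  rw [seg_eq_geo_image hT (by linarith) hgeo]
  ext z; constructor
  · rintro ⟨u, hu, rfl⟩; exact ⟨s + u, ⟨by linarith [hu.1], by linarith [hu.2]⟩, rfl⟩
  · rintro ⟨u, hu, rfl⟩; exact ⟨u - s, ⟨by linarith [hu.1], by linarith [hu.2]⟩, by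
      show f (s + (u - s)) = f u; congr 1; ring⟩

lemma line_dist {f : ℝ → T} (hf : Isometry f) (s t : ℝ) : dist (f s) (f t) = |s - t| := by
  rw [hf.dist_eq, Real.dist_eq]

/-- projection onto a line: the distance function to line points has the canonical form. -/
lemma proj_line (hT : IsRealTree T) {f : ℝ → T} (hf : Isometry f) (x : T) :
    ∃ α : ℝ, ∀ t : ℝ, dist x (f t) = dist x (f α) + |t - α| := by
  set R := dist x (f 0) + 1 with hR
  have hR1 : 1 ≤ R := by have := dist_nonneg (x := x) (y := f 0); linarith
  obtain ⟨w, hw1, hw2, hw3⟩ := median hT (f (-R)) (f R) x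
  -- hw1 : w ∈ seg (f (-R)) (f R), hw2 : w ∈ seg (f (-R)) x, hw3 : w ∈ seg x (f R)
  rw [line_seg hT hf (by linarith)] at hw1
  obtain ⟨α, hαIcc, rfl⟩ := hw1
  set D := dist x (f α) with hD
  refine ⟨α, ?_⟩
  -- in-range formula first
  have hin : ∀ t, -R ≤ t → t ≤ R → dist x (f t) = D + |t - α| := by
    intro t ht1 ht2
    rcases le_or_gt t α with h | h
    · -- f t ∈ seg (f (-R)) (f α) ⊆ seg (f (-R)) x
      have hmem : f t ∈ seg (f (-R)) (f α) := by
        rw [line_seg hT hf (by linarith [hαIcc.1])]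
        exact ⟨t, ⟨ht1, h⟩, rfl⟩
      have hsub : seg (f (-R)) (f α) ⊆ seg (f (-R)) x := subseg_left hw2
      have hmem2 : f t ∈ seg (f (-R)) x := hsub hmem
      have e1 : dist (f (-R)) (f t) + dist (f t) x = dist (f (-R)) x := hmem2
      have e2 : dist (f (-R)) (f α) + dist (f α) x = dist (f (-R)) x := hw2
      rw [line_dist hf, abs_of_nonpos (by linarith), dist_comm (f t) x] at e1
      rw [line_dist hf, abs_of_nonpos (by linarith [hαIcc.1]), dist_comm (f α) x, ← hD] at e2
      rw [abs_of_nonpos (by linarith)]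
      linarith
    · have hmem : f t ∈ seg (f α) (f R) := by
        rw [line_seg hT hf (by linarith [hαIcc.2])]
        exact ⟨t, ⟨h.le, ht2⟩, rfl⟩
      have hsub : seg (f α) (f R) ⊆ seg x (f R) := by
        rw [seg_comm (f α) (f R), seg_comm x (f R)]
        exact subseg_left (by rwa [seg_comm] at hw3)
      have hmem2 : f t ∈ seg x (f R) := hsub hmem
      have e1 : dist x (f t) + dist (f t) (f R) = dist x (f R) := hmem2
      have e2 : dist x (f α) + dist (f α) (f R) = dist x (f R) := hw3
      rw [line_dist hf, abs_of_nonpos (by linarith)] at e1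
      rw [line_dist hf, abs_of_nonpos (by linarith [hαIcc.2]), ← hD] at e2
      rw [abs_of_nonneg (by linarith)]
      linarith
  -- bounds on α and D
  have hD0 : dist x (f 0) = D + |α| := by
    have := hin 0 (by linarith) (by linarith)
    rwa [show |(0:ℝ) - α| = |α| by rw [abs_sub_comm]; simp] at this
  have hDnn : 0 ≤ D := dist_nonneg
  have hαR : |α| < R := by
    have : D + |α| = R - 1 := by rw [← hD0, hR]; ring
    have := abs_nonneg α; linarith
  have hαR1 : α < R := lt_of_le_of_lt (le_abs_self α) hαR
  have hαR2 : -R < α := by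
    have := neg_abs_le α; linarith
  intro t
  rcases le_or_gt (-R) t with ht1 | ht1
  · rcases le_or_gt t R with ht2 | ht2
    · exact hin t ht1 ht2
    · -- t > R : chain x — f α — f R — f t
      have hc1 : f α ∈ seg x (f R) := hw3
      have hc2 : f R ∈ seg (f α) (f t) := by
        show dist (f α) (f R) + dist (f R) (f t) = dist (f α) (f t)
        rw [line_dist hf, line_dist hf, line_dist hf,
          abs_of_nonpos (by linarith), abs_of_nonpos (by linarith),
          abs_of_nonpos (by linarith)]
        ring
      have hne : f α ≠ f R := by
        intro hcon
        have := line_dist hf α R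
        rw [hcon, dist_self] at this
        have : α - R = 0 := by rwa [eq_comm, abs_eq_zero] at this
        linarith
      obtain ⟨hsum, -, -⟩ := chain hT hc1 hc2 hne
      rw [hsum, line_dist hf, line_dist hf, ← hD,
        abs_of_nonpos (by linarith), abs_of_nonpos (by linarith),
        abs_of_nonneg (by linarith)]
      ring
  · -- t < -R : chain x — f α — f (-R) — f t
    have hc1 : f α ∈ seg x (f (-R)) := by rw [seg_comm]; exact hw2
    have hc2 : f (-R) ∈ seg (f α) (f t) := by
      show dist (f α) (f (-R)) + dist (f (-R)) (f t) = dist (f α) (f t)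
      rw [line_dist hf, line_dist hf, line_dist hf,
        abs_of_nonneg (by linarith), abs_of_nonneg (by linarith),
        abs_of_nonneg (by linarith)]
      ring
    have hne : f α ≠ f (-R) := by
      intro hcon
      have := line_dist hf α (-R)
      rw [hcon, dist_self] at this
      have : α - (-R) = 0 := by rwa [eq_comm, abs_eq_zero] at this
      linarith
    obtain ⟨hsum, -, -⟩ := chain hT hc1 hc2 hne
    rw [hsum, line_dist hf, line_dist hf, ← hD,
      abs_of_nonneg (by linarith), abs_of_nonneg (by linarith),
      abs_of_nonpos (by linarith)]
    ring

/-- the projection point lies on every segment from `x` to a line point. -/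
lemma proj_mem_seg {f : ℝ → T} (hf : Isometry f) {x : T} {α : ℝ}
    (hα : ∀ t : ℝ, dist x (f t) = dist x (f α) + |t - α|) (t : ℝ) :
    f α ∈ seg x (f t) := by
  show dist x (f α) + dist (f α) (f t) = dist x (f t)
  rw [line_dist hf, hα t, abs_sub_comm]

/-- classification of isometries of ℝ -/
lemma real_isom {φ : ℝ → ℝ} (h : ∀ s t, |φ s - φ t| = |s - t|) :
    (∀ t, φ t = φ 0 + t) ∨ (∀ t, φ t = φ 0 - t) := by
  have hpt : ∀ t, φ t = φ 0 + t ∨ φ t = φ 0 - t := by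
    intro t
    have ht := h t 0
    rw [sub_zero] at ht
    rcases abs_eq_abs.mp ht with h' | h'
    · left; linarith
    · right; linarith
  rcases hpt 1 with h1 | h1
  · left; intro t
    rcases hpt t with h' | h'
    · exact h'
    · have ht := h t 1
      rw [h', h1, show φ 0 - t - (φ 0 + 1) = -(t + 1) by ring, abs_neg] at ht
      have ht0 : t = 0 := by
        rcases abs_eq_abs.mp ht with h'' | h'' <;> linarith
      rw [h', ht0]; simp
  · right; intro t
    rcases hpt t with h' | h'
    · have ht := h t 1
      rw [h', h1, show φ 0 + t - (φ 0 - 1) = t + 1 by ring] at ht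
      have ht0 : t = 0 := by
        rcases abs_eq_abs.mp ht with h'' | h'' <;> linarith
      rw [h', ht0]; simp
    · exact h'

section Action

variable {G : Type*} [Group G]

/-- structure of a loxodromic isometry: translation along its axis, displacement formula,
and identification of the characteristic set with the axis. -/
lemma axis_structure (hT : IsRealTree T) (ρ : G →* (T ≃ᵢ T)) {g : G}
    {A : Set T} (hax : IsAxis ρ g A) :
    ∃ (f : ℝ → T) (c : ℝ), Isometry f ∧ Set.range f = A ∧ c ≠ 0 ∧
      (∀ t, ρ g (f t) = f (t + c)) ∧ charSet ρ g = A ∧ transLen ρ g = |c| := by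
  obtain ⟨⟨f, hf, hfA⟩, hinv, τ, hτ, hdisp⟩ := hax
  have hmemA : ∀ t : ℝ, f t ∈ A := by intro t; rw [← hfA]; exact Set.mem_range_self t
  have hgmem : ∀ t : ℝ, ∃ s, f s = ρ g (f t) := by
    intro t
    have : ρ g (f t) ∈ A := (hinv (f t)).mp (hmemA t)
    rwa [← hfA] at this
  choose σ hσ using hgmem
  have hσiso : ∀ s t, |σ s - σ t| = |s - t| := by
    intro s t
    have e1 : dist (f (σ s)) (f (σ t)) = |σ s - σ t| := line_dist hf _ _
    rw [hσ s, hσ t, IsometryEquiv.dist_eq, line_dist hf] at e1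
    exact e1.symm
  have hdispσ : ∀ t, |t - σ t| = τ := by
    intro t
    have e1 : dist (f t) (f (σ t)) = |t - σ t| := line_dist hf _ _
    rw [hσ t] at e1
    rw [← e1]; exact hdisp (f t) (hmemA t)
  rcases real_isom hσiso with hplus | hminus
  swap
  · exfalso
    have h1 := hdispσ (σ 0 / 2)
    rw [hminus (σ 0 / 2)] at h1
    have : |(0:ℝ)| = τ := by rw [← h1]; congr 1; ring
    simp at this; linarith
  set c := σ 0 with hc
  have hcτ : |c| = τ := by
    have := hdispσ 0
    rwa [show (0:ℝ) - σ 0 = -(σ 0) by ring, abs_neg] at this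
  have hc0 : c ≠ 0 := by
    intro h0; rw [h0] at hcτ; simp at hcτ; linarith
  have htrans : ∀ t, ρ g (f t) = f (t + c) := by
    intro t
    rw [← hσ t, hplus t]; congr 1; ring
  -- displacement of an arbitrary point
  have hkey : ∀ x : T, |c| ≤ dist x (ρ g x) ∧ (dist x (ρ g x) = |c| → x ∈ A) := by
    intro x
    obtain ⟨α, hα⟩ := proj_line hT hf x
    set D := dist x (f α) with hD
    have hDnn : 0 ≤ D := dist_nonneg
    have hform : ∀ t : ℝ, dist (ρ g x) (f t) = D + |t - c - α| := by
      intro t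
      have e1 : ρ g (f (t - c)) = f t := by rw [htrans]; congr 1; ring
      calc dist (ρ g x) (f t) = dist (ρ g x) (ρ g (f (t - c))) := by rw [e1]
        _ = dist x (f (t - c)) := (ρ g).dist_eq x (f (t - c))
        _ = D + |t - c - α| := by rw [hα (t - c)]
    rcases eq_or_lt_of_le hDnn with hD0 | hD0
    · have hx : x = f α := dist_eq_zero.mp hD0.symm
      have hdx : dist x (ρ g x) = |c| := by
        rw [hx, htrans α, line_dist hf, show α - (α + c) = -c by ring, abs_neg]
      exact ⟨le_of_eq hdx.symm, fun _ => hx ▸ hmemA α⟩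
    · have hc1 : f α ∈ seg x (f (α + c)) := proj_mem_seg hf hα (α + c)
      have hc2 : f (α + c) ∈ seg (f α) (ρ g x) := by
        show dist (f α) (f (α + c)) + dist (f (α + c)) (ρ g x) = dist (f α) (ρ g x)
        rw [line_dist hf, dist_comm (f (α + c)) (ρ g x), hform (α + c),
          dist_comm (f α) (ρ g x), hform α,
          show α + c - c - α = 0 by ring, show α - c - α = -c by ring, abs_neg,
          show α - (α + c) = -c by ring, abs_neg]
        simp [add_comm]
      have hne2 : f α ≠ f (α + c) := by
        intro hcon
        have hl := line_dist hf α (α + c)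
        rw [hcon, dist_self, show α - (α + c) = -c by ring, abs_neg] at hl
        exact hc0 (abs_eq_zero.mp hl.symm)
      obtain ⟨hsum, -, -⟩ := chain hT hc1 hc2 hne2
      have hD' : dist (f (α + c)) (ρ g x) = D := by
        rw [dist_comm, hform (α + c), show α + c - c - α = 0 by ring]; simp
      rw [hD', line_dist hf, show α - (α + c) = -c by ring, abs_neg] at hsum
      have hval : dist x (ρ g x) = 2 * D + |c| := by rw [hsum, ← hD]; ring
      constructor
      · rw [hval]; linarith
      · intro heq; rw [hval] at heq; exfalso; linarith
  have hTne : Nonempty T := ⟨f 0⟩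
  have hbdd : BddBelow (Set.range fun x : T => dist x (ρ g x)) := by
    refine ⟨0, ?_⟩; rintro v ⟨x, rfl⟩; exact dist_nonneg
  have htl : transLen ρ g = |c| := by
    apply le_antisymm
    · have hle := ciInf_le hbdd (f 0)
      have hval : dist (f 0) (ρ g (f 0)) = |c| := by
        rw [htrans 0, line_dist hf, zero_add, show (0:ℝ) - c = -c by ring, abs_neg]
      rw [hval] at hle
      exact hle
    · exact le_ciInf fun x => (hkey x).1
  have hcs : charSet ρ g = A := by
    ext x
    simp only [charSet, Set.mem_setOf_eq, htl]
    constructor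
    · exact (hkey x).2
    · intro hxA
      rw [← hfA] at hxA; obtain ⟨t, rfl⟩ := hxA
      rw [htrans t, line_dist hf, show t - (t + c) = -c by ring, abs_neg]
  exact ⟨f, c, hf, hfA, hc0, htrans, hcs, htl⟩

/-- main lemma: an isometry commuting with a minimal nonelementary action is the identity. -/
lemma key (hT : IsRealTree T) (ρ : G →* (T ≃ᵢ T)) (hmin : MinimalTreeAction ρ)
    (hne : NonelementaryTreeAction ρ) (ι : T ≃ᵢ T)
    (hcomm : ∀ (g : G) (x : T), ι (ρ g x) = ρ g (ι x)) : ∀ x : T, ι x = x := by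
  obtain ⟨g1, g2, ⟨Ag, haxg⟩, ⟨Ah, haxh⟩, hcpt⟩ := hne
  obtain ⟨f, c, hf, hfA, hc0, htrans, hcsg, htlg⟩ := axis_structure hT ρ haxg
  obtain ⟨f', c', hf', hfA', hc0', htrans', hcsh, htlh⟩ := axis_structure hT ρ haxh
  have hpres : ∀ (k : G) (x : T), (ι x ∈ charSet ρ k ↔ x ∈ charSet ρ k) := by
    intro k x
    have hd : dist (ι x) (ρ k (ι x)) = dist x (ρ k x) := by
      rw [← hcomm k x, ι.dist_eq]
    simp only [charSet, Set.mem_setOf_eq, hd]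
  have hιA : ∀ x : T, ι x ∈ Ag ↔ x ∈ Ag := by
    intro x; rw [← hcsg]; exact hpres g1 x
  have hιB : ∀ x : T, ι x ∈ Ah ↔ x ∈ Ah := by
    intro x; rw [← hcsh]; exact hpres g2 x
  have hfix : ∃ p : T, ι p = p := by
    by_cases hcap : (Ag ∩ Ah).Nonempty
    · -- ι translates the axis Ag; compact invariant set forces translation length 0
      obtain ⟨x0, hx0g, hx0h⟩ := hcap
      have hgmem : ∀ t : ℝ, ∃ s, f s = ι (f t) := by
        intro t
        have hm : ι (f t) ∈ Ag := (hιA (f t)).mpr (by rw [← hfA]; exact Set.mem_range_self t)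
        rwa [← hfA] at hm
      choose σ hσ using hgmem
      have hσiso : ∀ s t, |σ s - σ t| = |s - t| := by
        intro s t
        have e1 : dist (f (σ s)) (f (σ t)) = |σ s - σ t| := line_dist hf _ _
        rw [hσ s, hσ t, ι.dist_eq, line_dist hf] at e1
        exact e1.symm
      have hσcomm : ∀ t, σ (t + c) = σ t + c := by
        intro t
        have e1 : f (σ (t + c)) = f (σ t + c) := by
          calc f (σ (t + c)) = ι (f (t + c)) := hσ (t + c)
            _ = ι (ρ g1 (f t)) := by rw [htrans t]
            _ = ρ g1 (ι (f t)) := hcomm g1 (f t)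
            _ = ρ g1 (f (σ t)) := by rw [hσ t]
            _ = f (σ t + c) := htrans (σ t)
        exact hf.injective e1
      rcases real_isom hσiso with hplus | hminus
      swap
      · exfalso
        have hcc := hσcomm 0
        rw [hminus (0 + c), hminus 0] at hcc
        exact hc0 (by linarith)
      set e := σ 0 with he
      set K := {t : ℝ | f t ∈ Ah} with hK
      have hKne : K.Nonempty := by
        rw [← hfA] at hx0g; obtain ⟨t0, rfl⟩ := hx0g; exact ⟨t0, hx0h⟩
      have hC := hcpt
      rw [hcsg, hcsh] at hC
      obtain ⟨t0, ht0⟩ := hKne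
      obtain ⟨r, hr⟩ := hC.isBounded.subset_closedBall (f t0)
      have hbound : ∀ t ∈ K, |t - t0| ≤ r := by
        intro t ht
        have hmem : f t ∈ Ag ∩ Ah := ⟨by rw [← hfA]; exact Set.mem_range_self t, ht⟩
        have hb := hr hmem
        rw [Metric.mem_closedBall] at hb
        rw [← line_dist hf t t0]
        exact hb
      have hKbddA : BddAbove K := ⟨t0 + r, fun t ht => by
        have hb := hbound t ht; rw [abs_le] at hb; linarith [hb.2]⟩
      have hKbddB : BddBelow K := ⟨t0 - r, fun t ht => by
        have hb := hbound t ht; rw [abs_le] at hb; linarith [hb.1]⟩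
      have hKclosed : IsClosed K := by
        have hKeq : K = f ⁻¹' (Ag ∩ Ah) := by
          ext t
          simp only [hK, Set.mem_setOf_eq, Set.mem_preimage, Set.mem_inter_iff]
          exact ⟨fun hh => ⟨by rw [← hfA]; exact Set.mem_range_self t, hh⟩, fun hh => hh.2⟩
        rw [hKeq]
        exact hC.isClosed.preimage hf.continuous
      have hKadd : ∀ t ∈ K, t + e ∈ K := by
        intro t ht
        show f (t + e) ∈ Ah
        have hfe : f (e + t) = ι (f t) := by rw [← hplus t]; exact hσ t
        rw [add_comm, hfe]
        exact (hιB (f t)).mpr ht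
      have hsup := hKclosed.csSup_mem ⟨t0, ht0⟩ hKbddA
      have hinf := hKclosed.csInf_mem ⟨t0, ht0⟩ hKbddB
      have h1 : sSup K + e ≤ sSup K := le_csSup hKbddA (hKadd _ hsup)
      have h2 : sInf K ≤ sInf K + e := csInf_le hKbddB (hKadd _ hinf)
      have he0 : e = 0 := le_antisymm (by linarith) (by linarith)
      refine ⟨f 0, ?_⟩
      have h3 : f e = ι (f 0) := hσ 0
      rw [he0] at h3
      exact h3.symm
    · -- disjoint axes: the bridge endpoint is fixed
      have hdisj : Ag ∩ Ah = ∅ := Set.not_nonempty_iff_eq_empty.mp hcap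
      obtain ⟨α₀, hα₀⟩ := proj_line hT hf (f' 0)
      have hform : ∀ s t : ℝ, dist (f' s) (f t) = dist (f' s) (f α₀) + |t - α₀| := by
        intro s
        obtain ⟨αs, hαs⟩ := proj_line hT hf (f' s)
        have hαeq : αs = α₀ := by
          by_contra hne'
          have hc1 : f α₀ ∈ seg (f' 0) (f αs) := proj_mem_seg hf hα₀ αs
          have hc2 : f αs ∈ seg (f α₀) (f' s) := by
            rw [seg_comm]; exact proj_mem_seg hf hαs α₀
          have hne2 : f α₀ ≠ f αs := fun hcon => hne' (hf.injective hcon).symm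
          obtain ⟨-, hb, -⟩ := chain hT hc1 hc2 hne2
          have hseg : seg (f' 0) (f' s) ⊆ Ah := by
            rcases le_total 0 s with h0s | h0s
            · rw [line_seg hT hf' h0s, ← hfA']
              exact Set.image_subset_range f' _
            · rw [seg_comm, line_seg hT hf' h0s, ← hfA']
              exact Set.image_subset_range f' _
          have hcontr : f α₀ ∈ Ag ∩ Ah :=
            ⟨by rw [← hfA]; exact Set.mem_range_self _, hseg hb⟩
          rw [hdisj] at hcontr
          exact hcontr
        intro t; rw [← hαeq]; exact hαs t
      obtain ⟨β, hβ⟩ := proj_line hT hf' (f α₀)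
      have hdd : ∀ t s : ℝ, dist (f t) (f' s) =
          dist (f α₀) (f' β) + |s - β| + |t - α₀| := by
        intro t s
        rw [dist_comm, hform s t, dist_comm (f' s) (f α₀), hβ s]
      have hpg : ι (f α₀) ∈ Ag :=
        (hιA _).mpr (by rw [← hfA]; exact Set.mem_range_self _)
      have hph : ι (f' β) ∈ Ah :=
        (hιB _).mpr (by rw [← hfA']; exact Set.mem_range_self _)
      rw [← hfA] at hpg
      rw [← hfA'] at hph
      obtain ⟨t₁, ht₁⟩ := hpg
      obtain ⟨s₁, hs₁⟩ := hph
      have hE : dist (f t₁) (f' s₁) = dist (f α₀) (f' β) := by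
        rw [ht₁, hs₁, ι.dist_eq]
      rw [hdd t₁ s₁] at hE
      have habs1 := abs_nonneg (t₁ - α₀)
      have habs2 := abs_nonneg (s₁ - β)
      have ht1 : t₁ = α₀ := by
        have : |t₁ - α₀| = 0 := by linarith
        have := abs_eq_zero.mp this; linarith
      refine ⟨f α₀, ?_⟩
      rw [← ht₁, ht1]
  -- the fixed point set is everything
  obtain ⟨p, hp⟩ := hfix
  set Fix := {x : T | ι x = x} with hFixdef
  have h1 : Fix.Nonempty := ⟨p, hp⟩
  have h2 : IsSubtree Fix := by
    intro u hu v hv z hz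
    have hu' : ι u = u := hu
    have hv' : ι v = v := hv
    have himg : ι z ∈ seg u v := by
      have hm := isom_mem_seg ι hz
      rwa [hu', hv'] at hm
    have hdist : dist u (ι z) = dist u z := by
      calc dist u (ι z) = dist (ι u) (ι z) := by rw [hu']
        _ = dist u z := ι.dist_eq u z
    exact seg_unique_pt hT himg hz hdist
  have h3 : ∀ (k : G), ∀ x ∈ Fix, ρ k x ∈ Fix := by
    intro k x hx
    show ι (ρ k x) = ρ k x
    rw [hcomm k x, show ι x = x from hx]
  have huniv := hmin Fix h1 h2 h3
  intro x
  show x ∈ Fix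
  rw [huniv]
  exact Set.mem_univ x

end Action

end RTAux

/-- An isometry of a minimal nonelementary `G`-tree commuting with the `G`-action is the
identity; in particular the center of `G` acts trivially. -/
theorem isometry_commuting_with_action_eq_id
    (G : Type*) [Group G] (T : Type*) [MetricSpace T] (hT : IsRealTree T)
    (ρ : G →* (T ≃ᵢ T)) (hmin : MinimalTreeAction ρ) (hne : NonelementaryTreeAction ρ)
    (ι : T ≃ᵢ T) (hcomm : ∀ (g : G) (x : T), ι (ρ g x) = ρ g (ι x)) :
    (∀ x : T, ι x = x) ∧ ∀ z ∈ Subgroup.center G, ∀ x : T, ρ z x = x := by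
  constructor
  · exact RTAux.key hT ρ hmin hne ι hcomm
  · intro z hz x
    have hcomm' : ∀ (k : G) (y : T), (ρ z) (ρ k y) = ρ k ((ρ z) y) := by
      intro k y
      calc (ρ z) ((ρ k) y) = (ρ (z * k)) y := by rw [map_mul]; rfl
        _ = (ρ (k * z)) y := by rw [Subgroup.mem_center_iff.mp hz k]
        _ = (ρ k) ((ρ z) y) := by rw [map_mul]; rfl
    exact RTAux.key hT ρ hmin hne (ρ z) hcomm' x
end
end

section
/- Let G be a group, let T be a G-tree, and let g, h, h' be elements of G that are loxodromic in T. If the distance between the closest-point projection of Axis_T(h) onto Axis_T(g) and the closest-point projection of Axis_T(h') onto Axis_T(g) is greater than the translation length ||g||_T, then the characteristic set of gh and the axis of h' are disjoint. -/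
noncomputable section

open Metric Set

universe u v

section TreeMore

variable {G : Type*} [Group G] {T : Type*} [MetricSpace T]

/-- Pointwise stabilizer of a subset of `T`. -/
def setStabilizer (ρ : G →* (T ≃ᵢ T)) (s : Set T) : Subgroup G where
  carrier := {g : G | ∀ z ∈ s, ρ g z = z}
  one_mem' := fun z _ => by simp
  mul_mem' := @fun a b ha hb z hz => by
    have h1 : (ρ (a * b)) z = ρ a (ρ b z) := by rw [map_mul]; rfl
    rw [h1, hb z hz, ha z hz]
  inv_mem' := @fun a ha z hz => by
    have h1 : ρ a z = z := ha z hz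
    calc ρ a⁻¹ z = ρ a⁻¹ (ρ a z) := by rw [h1]
    _ = (ρ a⁻¹ * ρ a) z := rfl
    _ = z := by rw [← map_mul]; simp

/-- Closest-point projection of the subset `A` onto the subset `B`. -/
def projSet {T' : Type*} [MetricSpace T'] (A B : Set T') : Set T' :=
  {y : T' | y ∈ B ∧ ∃ x ∈ A, dist x y = Metric.infDist x B}

/-- The bridge between two subsets `A, B`: the shortest segment from a point of `A`
to a point of `B`. -/
def IsBridge {T' : Type*} [MetricSpace T'] (A B I : Set T') : Prop :=
  ∃ a b : T', a ∈ A ∧ b ∈ B ∧ I = seg a b ∧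
    ∀ a' ∈ A, ∀ b' ∈ B, dist a b ≤ dist a' b'

/-- `u` and `v` are the endpoints of an edge of the simplicial structure with vertex
set `V`. -/
def IsSimpEdge {T' : Type*} [MetricSpace T'] (V : Set T') (u v : T') : Prop :=
  u ∈ V ∧ v ∈ V ∧ u ≠ v ∧ seg u v ∩ V = {u, v}

/-- `V` is the vertex set of a `G`-invariant simplicial structure on the tree `T`,
all of whose edges have length `1` (the simplicial metric). -/
def IsUnitSimplicial (ρ : G →* (T ≃ᵢ T)) (V : Set T) : Prop :=
  (∀ (g : G), ∀ v ∈ V, ρ g v ∈ V) ∧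
  (∀ u ∈ V, ∀ v ∈ V, u ≠ v → 1 ≤ dist u v) ∧
  (∀ u v : T, IsSimpEdge V u v → dist u v = 1) ∧
  (∀ x : T, ∃ u ∈ V, ∃ v ∈ V, x ∈ seg u v)

/-- `V` is the vertex set of a `G`-invariant simplicial structure on the tree `T`
(with arbitrary edge lengths). -/
def IsSimplicialStructure (ρ : G →* (T ≃ᵢ T)) (V : Set T) : Prop :=
  (∀ (g : G), ∀ v ∈ V, ρ g v ∈ V) ∧
  (∀ u ∈ V, ∀ v ∈ V, (seg u v ∩ V).Finite) ∧
  (∀ x : T, ∃ u ∈ V, ∃ v ∈ V, x ∈ seg u v)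

/-- `g` is an `(L,N)`-WPD element for the action on the tree `T`: it is loxodromic and
the pointwise stabiliser of every arc of its axis of length at least `L` has at most
`N` elements. -/
def IsLNWPD (ρ : G →* (T ≃ᵢ T)) (L : ℝ) (N : ℕ) (g : G) : Prop :=
  Loxodromic ρ g ∧
  ∀ x y : T, x ∈ charSet ρ g → y ∈ charSet ρ g → L ≤ dist x y →
    ∃ s : Finset G, s.card ≤ N ∧ ∀ k : G, (∀ z ∈ seg x y, ρ k z = z) → k ∈ s

/-- WPD element of a group action on a simplicial tree. -/
def IsTreeWPD (ρ : G →* (T ≃ᵢ T)) (g : G) : Prop :=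
  ∃ L : ℝ, 0 ≤ L ∧ ∃ N : ℕ, IsLNWPD ρ L N g

end TreeMore


/-! ### Auxiliary development: geometry of real trees -/

section RealTreeAux

variable {T : Type*} [MetricSpace T]

/-- A geodesic-like parametrization of the segment from `x` to `y`. -/
def GeodLike (f : ℝ → T) (x y : T) : Prop :=
  f 0 = x ∧ f (dist x y) = y ∧
    ∀ s ∈ Set.Icc (0:ℝ) (dist x y), ∀ t ∈ Set.Icc (0:ℝ) (dist x y),
      dist (f s) (f t) = |s - t|

lemma exists_geodLike (hT : IsRealTree T) (x y : T) : ∃ f : ℝ → T, GeodLike f x y :=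
  hT.1 x y

namespace GeodLike

variable {f : ℝ → T} {x y : T}

lemma dist_from_left (hf : GeodLike f x y) {t : ℝ}
    (ht : t ∈ Set.Icc (0:ℝ) (dist x y)) : dist x (f t) = t := by
  have h := hf.2.2 0 ⟨le_refl 0, dist_nonneg⟩ t ht
  rw [hf.1] at h
  rw [h, abs_of_nonpos (by linarith [ht.1])]
  ring

lemma dist_to_right (hf : GeodLike f x y) {t : ℝ}
    (ht : t ∈ Set.Icc (0:ℝ) (dist x y)) : dist (f t) y = dist x y - t := by
  have h := hf.2.2 t ht (dist x y) ⟨dist_nonneg, le_refl _⟩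
  rw [hf.2.1] at h
  rw [h, abs_of_nonpos (by linarith [ht.2])]
  ring

lemma lipOn (hf : GeodLike f x y) :
    ∀ s ∈ Set.Icc (0:ℝ) (dist x y), ∀ t ∈ Set.Icc (0:ℝ) (dist x y),
      dist (f s) (f t) ≤ |s - t| := fun s hs t ht => le_of_eq (hf.2.2 s hs t ht)

lemma injOn (hf : GeodLike f x y) : Set.InjOn f (Set.Icc 0 (dist x y)) := by
  intro s hs t ht h
  have := hf.2.2 s hs t ht
  rw [h, dist_self] at this
  have : s - t = 0 := by
    have := this.symm
    rwa [abs_eq_zero] at this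
  linarith

end GeodLike

/-- Build an arc from a 1-Lipschitz injective parametrization on `[0, L]`. -/
lemma isArcBetween_of_param {a b : T} {L : ℝ} (hL : 0 < L) {g : ℝ → T}
    (hlip : ∀ s ∈ Set.Icc (0:ℝ) L, ∀ t ∈ Set.Icc (0:ℝ) L, dist (g s) (g t) ≤ |s - t|)
    (hinj : Set.InjOn g (Set.Icc 0 L)) (h0 : g 0 = a) (hL' : g L = b) :
    IsArcBetween a b (g '' Set.Icc 0 L) := by
  have hmaps : ∀ r ∈ Set.Icc (0:ℝ) 1, r * L ∈ Set.Icc (0:ℝ) L := by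
    intro r hr
    exact ⟨mul_nonneg hr.1 hL.le, by nlinarith [hr.2]⟩
  have hcontg : ContinuousOn g (Set.Icc 0 L) := by
    refine (LipschitzOnWith.of_dist_le_mul (K := 1) ?_).continuousOn
    intro s hs t ht
    have := hlip s hs t ht
    rw [Real.dist_eq]
    simpa using this
  refine ⟨fun r => g (r * L), ?_, ?_, ?_, ?_, ?_⟩
  · exact hcontg.comp ((continuous_mul_right L).continuousOn) hmaps
  · intro r1 h1 r2 h2 heq
    have := hinj (hmaps r1 h1) (hmaps r2 h2) heq
    exact mul_right_cancel₀ (ne_of_gt hL) this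
  · show g (0 * L) = a
    rw [zero_mul, h0]
  · show g (1 * L) = b
    rw [one_mul, hL']
  · have himg : (fun r : ℝ => r * L) '' Set.Icc 0 1 = Set.Icc 0 L := by
      rw [image_mul_right_Icc (zero_le_one) hL.le]
      norm_num
    calc g '' Set.Icc 0 L = g '' ((fun r : ℝ => r * L) '' Set.Icc 0 1) := by rw [himg]
      _ = (fun r => g (r * L)) '' Set.Icc 0 1 := by rw [← Set.image_comp]; rfl

lemma GeodLike.arc {f : ℝ → T} {x y : T} (hf : GeodLike f x y)
    (hpos : 0 < dist x y) : IsArcBetween x y (f '' Set.Icc 0 (dist x y)) :=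
  isArcBetween_of_param hpos hf.lipOn hf.injOn hf.1 hf.2.1

lemma geodLike_image_eq (hT : IsRealTree T) {f g : ℝ → T} {x y : T}
    (hf : GeodLike f x y) (hg : GeodLike g x y) :
    f '' Set.Icc 0 (dist x y) = g '' Set.Icc 0 (dist x y) := by
  rcases eq_or_lt_of_le (dist_nonneg : (0:ℝ) ≤ dist x y) with h0 | hpos
  · rw [← h0, Set.Icc_self, Set.image_singleton, Set.image_singleton, hf.1, hg.1]
  · exact hT.2 x y _ _ (hf.arc hpos) (hg.arc hpos)

lemma mem_seg {x y z : T} : z ∈ seg x y ↔ dist x z + dist z y = dist x y := Iff.rfl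

lemma seg_eq_image (hT : IsRealTree T) {f : ℝ → T} {x y : T} (hf : GeodLike f x y) :
    seg x y = f '' Set.Icc 0 (dist x y) := by
  apply Set.Subset.antisymm
  · intro z hz
    have hz' : dist x z + dist z y = dist x y := hz
    obtain ⟨f1, hf1⟩ := exists_geodLike hT x z
    obtain ⟨f2, hf2⟩ := exists_geodLike hT z y
    set d1 := dist x z with hd1
    set d2 := dist z y with hd2
    set D := dist x y with hD
    have hd1n : 0 ≤ d1 := dist_nonneg
    have hd2n : 0 ≤ d2 := dist_nonneg
    set F : ℝ → T := fun t => if t ≤ d1 then f1 t else f2 (t - d1) with hF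
    have hFleft : ∀ t ∈ Set.Icc (0:ℝ) D, dist x (F t) = t := by
      intro t ht
      by_cases h : t ≤ d1
      · simp only [hF, if_pos h]
        exact hf1.dist_from_left ⟨ht.1, h⟩
      · push_neg at h
        simp only [hF, if_neg (not_le.2 h)]
        have ht' : t - d1 ∈ Set.Icc (0:ℝ) d2 := ⟨by linarith, by linarith [ht.2]⟩
        have h1 : dist z (f2 (t - d1)) = t - d1 := hf2.dist_from_left ht'
        have h2 : dist (f2 (t - d1)) y = d2 - (t - d1) := hf2.dist_to_right ht'
        have hub : dist x (f2 (t - d1)) ≤ t := by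
          calc dist x (f2 (t - d1)) ≤ dist x z + dist z (f2 (t - d1)) := dist_triangle _ _ _
            _ = d1 + (t - d1) := by rw [h1]
            _ = t := by ring
        have hlb : D ≤ dist x (f2 (t - d1)) + dist (f2 (t - d1)) y := dist_triangle _ _ _
        rw [h2] at hlb
        linarith
    have hFright : ∀ t ∈ Set.Icc (0:ℝ) D, dist (F t) y = D - t := by
      intro t ht
      have h1 := hFleft t ht
      have hub : dist (F t) y ≤ D - t := by
        by_cases h : t ≤ d1
        · simp only [hF, if_pos h]
          have h2 : dist (f1 t) z = d1 - t := hf1.dist_to_right ⟨ht.1, h⟩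
          calc dist (f1 t) y ≤ dist (f1 t) z + dist z y := dist_triangle _ _ _
            _ = (d1 - t) + d2 := by rw [h2]
            _ = D - t := by rw [← hz']; ring
        · push_neg at h
          simp only [hF, if_neg (not_le.2 h)]
          have ht' : t - d1 ∈ Set.Icc (0:ℝ) d2 := ⟨by linarith, by linarith [ht.2]⟩
          have h2 : dist (f2 (t - d1)) y = d2 - (t - d1) := hf2.dist_to_right ht'
          rw [h2]; linarith
      have hlb : D ≤ dist x (F t) + dist (F t) y := dist_triangle _ _ _
      rw [h1] at hlb
      linarith
    have hFG : GeodLike F x y := by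
      refine ⟨?_, ?_, ?_⟩
      · simp only [hF, if_pos hd1n]
        exact hf1.1
      · have := hFright D ⟨dist_nonneg, le_refl _⟩
        simp only [sub_self] at this
        exact dist_eq_zero.1 this
      · have key : ∀ s ∈ Set.Icc (0:ℝ) D, ∀ t ∈ Set.Icc (0:ℝ) D, s ≤ t →
            dist (F s) (F t) = t - s := by
          intro s hs t ht hst
          have hub : dist (F s) (F t) ≤ t - s := by
            by_cases h2 : t ≤ d1
            · have h1 : s ≤ d1 := le_trans hst h2
              simp only [hF, if_pos h1, if_pos h2]
              rw [hf1.2.2 s ⟨hs.1, h1⟩ t ⟨ht.1, h2⟩, abs_of_nonpos (by linarith)]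
              linarith
            · push_neg at h2
              by_cases h1 : s ≤ d1
              · simp only [hF, if_pos h1, if_neg (not_le.2 h2)]
                have hs' : dist (f1 s) z = d1 - s := hf1.dist_to_right ⟨hs.1, h1⟩
                have ht' : dist z (f2 (t - d1)) = t - d1 :=
                  hf2.dist_from_left ⟨by linarith, by linarith [ht.2]⟩
                calc dist (f1 s) (f2 (t - d1))
                    ≤ dist (f1 s) z + dist z (f2 (t - d1)) := dist_triangle _ _ _
                  _ = (d1 - s) + (t - d1) := by rw [hs', ht']
                  _ = t - s := by ring
              · push_neg at h1
                simp only [hF, if_neg (not_le.2 h1), if_neg (not_le.2 h2)]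
                rw [hf2.2.2 (s - d1) ⟨by linarith, by linarith [hs.2]⟩
                    (t - d1) ⟨by linarith, by linarith [ht.2]⟩]
                rw [abs_of_nonpos (by linarith)]
                linarith
          have hlb : t - s ≤ dist (F s) (F t) := by
            have h1 := hFleft s hs
            have h2 := hFleft t ht
            have := dist_triangle x (F s) (F t)
            rw [h1] at this; rw [h2] at this
            linarith
          linarith
        intro s hs t ht
        rcases le_total s t with h | h
        · rw [key s hs t ht h, abs_of_nonpos (by linarith)]; ring
        · rw [dist_comm, key t ht s hs h, abs_of_nonneg (by linarith)]
      -- done GeodLike F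
    have hzF : z = F d1 := by
      simp only [hF, if_pos (le_refl d1)]
      exact (hf1.2.1).symm
    have hd1D : d1 ∈ Set.Icc (0:ℝ) D := ⟨hd1n, by rw [← hz']; linarith⟩
    have himg := geodLike_image_eq hT hf hFG
    rw [himg]
    exact ⟨d1, hd1D, hzF.symm⟩
  · rintro z ⟨t, ht, rfl⟩
    show dist x (f t) + dist (f t) y = dist x y
    rw [hf.dist_from_left ht, hf.dist_to_right ht]
    ring

lemma seg_ordered (hT : IsRealTree T) {a b u v : T}
    (hu : u ∈ seg a b) (hv : v ∈ seg a b) (h : dist a u ≤ dist a v) : u ∈ seg a v := by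
  obtain ⟨f, hf⟩ := exists_geodLike hT a b
  rw [seg_eq_image hT hf] at hu hv
  obtain ⟨s, hs, rfl⟩ := hu
  obtain ⟨t, ht, rfl⟩ := hv
  have hs' : dist a (f s) = s := hf.dist_from_left hs
  have ht' : dist a (f t) = t := hf.dist_from_left ht
  rw [hs', ht'] at h
  show dist a (f s) + dist (f s) (f t) = dist a (f t)
  rw [hs', ht', hf.2.2 s hs t ht, abs_of_nonpos (by linarith)]
  ring

/-- Existence of medians in a real tree. -/
lemma exists_median (hT : IsRealTree T) (x y z : T) :
    ∃ m : T, m ∈ seg x y ∧ m ∈ seg x z ∧ m ∈ seg y z := by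
  obtain ⟨f1, hf1⟩ := exists_geodLike hT x y
  obtain ⟨f2, hf2⟩ := exists_geodLike hT x z
  set D1 := dist x y with hD1
  set D2 := dist x z with hD2
  set S : Set ℝ := {t | t ∈ Set.Icc 0 (min D1 D2) ∧ f1 t = f2 t} with hS
  have h0S : (0:ℝ) ∈ S := ⟨⟨le_refl _, le_min dist_nonneg dist_nonneg⟩, by rw [hf1.1, hf2.1]⟩
  have hbdd : BddAbove S := ⟨min D1 D2, fun t ht => ht.1.2⟩
  have hne : S.Nonempty := ⟨0, h0S⟩
  have hsub1 : Set.Icc (0:ℝ) (min D1 D2) ⊆ Set.Icc 0 D1 :=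
    Set.Icc_subset_Icc_right (min_le_left _ _)
  have hsub2 : Set.Icc (0:ℝ) (min D1 D2) ⊆ Set.Icc 0 D2 :=
    Set.Icc_subset_Icc_right (min_le_right _ _)
  have hcont1 : ContinuousOn f1 (Set.Icc 0 (min D1 D2)) := by
    refine ((LipschitzOnWith.of_dist_le_mul (K := 1) ?_).continuousOn).mono hsub1
    intro s hs t ht
    have := hf1.lipOn s hs t ht
    rw [Real.dist_eq]; simpa using this
  have hcont2 : ContinuousOn f2 (Set.Icc 0 (min D1 D2)) := by
    refine ((LipschitzOnWith.of_dist_le_mul (K := 1) ?_).continuousOn).mono hsub2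
    intro s hs t ht
    have := hf2.lipOn s hs t ht
    rw [Real.dist_eq]; simpa using this
  have hclosed : IsClosed S := by
    have heq : S = Set.Icc 0 (min D1 D2) ∩ (fun t => dist (f1 t) (f2 t)) ⁻¹' {0} := by
      ext t
      simp only [hS, Set.mem_setOf_eq, Set.mem_inter_iff, Set.mem_preimage,
        Set.mem_singleton_iff, dist_eq_zero]
    rw [heq]
    exact ContinuousOn.preimage_isClosed_of_isClosed
      (continuous_dist.comp_continuousOn (hcont1.prodMk hcont2)) isClosed_Icc
      isClosed_singleton
  set c := sSup S with hc
  have hcS : c ∈ S := hclosed.csSup_mem hne hbdd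
  have hc0 : 0 ≤ c := le_csSup hbdd h0S
  have hc1 : c ≤ D1 := le_trans hcS.1.2 (min_le_left _ _)
  have hc2 : c ≤ D2 := le_trans hcS.1.2 (min_le_right _ _)
  have hfc : f1 c = f2 c := hcS.2
  -- divergence after c
  have hdiv : ∀ u ∈ Set.Icc c D1, ∀ v ∈ Set.Icc c D2,
      dist (f1 u) (f2 v) = (u - c) + (v - c) := by
    intro u hu v hv
    have hl1 : 0 ≤ u - c := by linarith [hu.1]
    have hl2 : 0 ≤ v - c := by linarith [hv.1]
    have huIcc : u ∈ Set.Icc (0:ℝ) D1 := ⟨by linarith, hu.2⟩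
    have hvIcc : v ∈ Set.Icc (0:ℝ) D2 := ⟨by linarith, hv.2⟩
    set l1 := u - c with hl1def
    set l2 := v - c with hl2def
    set L := l1 + l2 with hLdef
    rcases eq_or_lt_of_le (show (0:ℝ) ≤ L by linarith) with hL0 | hLpos
    · have hl1' : l1 = 0 := by linarith
      have hl2' : l2 = 0 := by linarith
      have hu' : u = c := by rw [hl1def] at hl1'; linarith
      have hv' : v = c := by rw [hl2def] at hl2'; linarith
      rw [hu', hv', hfc, dist_self]
      linarith
    · set Gm : ℝ → T := fun t => if t ≤ l1 then f1 (u - t) else f2 (c + (t - l1)) with hGm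
      have hmem1 : ∀ t : ℝ, 0 ≤ t → t ≤ l1 → u - t ∈ Set.Icc (0:ℝ) D1 := by
        intro t h1 h2
        rw [hl1def] at h2
        exact ⟨by linarith, by linarith [hu.2]⟩
      have hmem2 : ∀ t : ℝ, l1 ≤ t → t ≤ L → c + (t - l1) ∈ Set.Icc (0:ℝ) D2 := by
        intro t h1 h2
        rw [hLdef] at h2
        exact ⟨by linarith, by linarith [hv.2]⟩
      have hdistx : ∀ t ∈ Set.Icc (0:ℝ) L,
          dist x (Gm t) = if t ≤ l1 then u - t else c + (t - l1) := by
        intro t ht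
        by_cases h : t ≤ l1
        · rw [if_pos h]
          show dist x (if t ≤ l1 then f1 (u - t) else f2 (c + (t - l1))) = u - t
          rw [if_pos h]
          exact hf1.dist_from_left (hmem1 t ht.1 h)
        · rw [if_neg h]
          show dist x (if t ≤ l1 then f1 (u - t) else f2 (c + (t - l1))) = c + (t - l1)
          rw [if_neg h]
          push_neg at h
          exact hf2.dist_from_left (hmem2 t h.le ht.2)
      have hlip : ∀ s ∈ Set.Icc (0:ℝ) L, ∀ t ∈ Set.Icc (0:ℝ) L,
          dist (Gm s) (Gm t) ≤ |s - t| := by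
        have key : ∀ s ∈ Set.Icc (0:ℝ) L, ∀ t ∈ Set.Icc (0:ℝ) L, s ≤ t →
            dist (Gm s) (Gm t) ≤ t - s := by
          intro s hs t ht hst
          by_cases h2 : t ≤ l1
          · have h1 : s ≤ l1 := le_trans hst h2
            show dist (if s ≤ l1 then f1 (u - s) else f2 (c + (s - l1)))
                (if t ≤ l1 then f1 (u - t) else f2 (c + (t - l1))) ≤ t - s
            rw [if_pos h1, if_pos h2]
            rw [hf1.2.2 _ (hmem1 s hs.1 h1) _ (hmem1 t ht.1 h2)]
            rw [abs_of_nonneg (by linarith)]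
            linarith
          · push_neg at h2
            by_cases h1 : s ≤ l1
            · show dist (if s ≤ l1 then f1 (u - s) else f2 (c + (s - l1)))
                  (if t ≤ l1 then f1 (u - t) else f2 (c + (t - l1))) ≤ t - s
              rw [if_pos h1, if_neg (not_le.2 h2)]
              have hcIcc1 : c ∈ Set.Icc (0:ℝ) D1 := ⟨hc0, hc1⟩
              have e1 : dist (f1 (u - s)) (f1 c) = l1 - s := by
                rw [hf1.2.2 _ (hmem1 s hs.1 h1) c hcIcc1]
                rw [abs_of_nonneg (by rw [hl1def] at h1; linarith)]
                rw [hl1def]; ring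
              have e2 : dist (f2 c) (f2 (c + (t - l1))) = t - l1 := by
                rw [hf2.2.2 c ⟨hc0, hc2⟩ _ (hmem2 t h2.le ht.2)]
                rw [abs_of_nonpos (by linarith)]
                ring
              calc dist (f1 (u - s)) (f2 (c + (t - l1)))
                  ≤ dist (f1 (u - s)) (f1 c) + dist (f1 c) (f2 (c + (t - l1))) :=
                    dist_triangle _ _ _
                _ = (l1 - s) + dist (f2 c) (f2 (c + (t - l1))) := by rw [e1, hfc]
                _ = (l1 - s) + (t - l1) := by rw [e2]
                _ = t - s := by ring
            · push_neg at h1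
              show dist (if s ≤ l1 then f1 (u - s) else f2 (c + (s - l1)))
                  (if t ≤ l1 then f1 (u - t) else f2 (c + (t - l1))) ≤ t - s
              rw [if_neg (not_le.2 h1), if_neg (not_le.2 h2)]
              rw [hf2.2.2 _ (hmem2 s h1.le hs.2) _ (hmem2 t h2.le ht.2)]
              rw [abs_of_nonpos (by linarith)]
              linarith
        intro s hs t ht
        rcases le_total s t with h | h
        · calc dist (Gm s) (Gm t) ≤ t - s := key s hs t ht h
            _ = |s - t| := by rw [abs_of_nonpos (by linarith)]; ring
        · calc dist (Gm s) (Gm t) = dist (Gm t) (Gm s) := dist_comm _ _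
            _ ≤ s - t := key t ht s hs h
            _ = |s - t| := by rw [abs_of_nonneg (by linarith)]
      have hinj : Set.InjOn Gm (Set.Icc 0 L) := by
        have hmix : ∀ s ∈ Set.Icc (0:ℝ) L, ∀ t ∈ Set.Icc (0:ℝ) L,
            s ≤ l1 → ¬(t ≤ l1) → Gm s = Gm t → False := by
          intro s hs t ht h1 h2 heq
          have e1 := hdistx s hs
          have e2 := hdistx t ht
          rw [if_pos h1] at e1
          rw [if_neg h2] at e2
          push_neg at h2
          have hr : u - s = c + (t - l1) := by rw [← e1, ← e2, heq]
          have hrS : u - s ∈ S := by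
            refine ⟨⟨by rw [hr]; linarith, ?_⟩, ?_⟩
            · apply le_min
              · linarith [hs.1, hu.2]
              · rw [hr, hLdef] at *
                have := ht.2
                rw [hl2def] at *
                linarith [hv.2]
            · have g1 : Gm s = f1 (u - s) := by
                show (if s ≤ l1 then f1 (u - s) else f2 (c + (s - l1))) = f1 (u - s)
                rw [if_pos h1]
              have g2 : Gm t = f2 (u - s) := by
                show (if t ≤ l1 then f1 (u - t) else f2 (c + (t - l1))) = f2 (u - s)
                rw [if_neg (not_le.2 h2), ← hr]
              rw [← g1, ← g2, heq]
          have hle : u - s ≤ c := le_csSup hbdd hrS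
          rw [hr] at hle
          linarith
        intro s hs t ht heq
        by_cases h1 : s ≤ l1 <;> by_cases h2 : t ≤ l1
        · have e1 := hdistx s hs
          have e2 := hdistx t ht
          rw [if_pos h1] at e1
          rw [if_pos h2] at e2
          have : u - s = u - t := by rw [← e1, ← e2, heq]
          linarith
        · exact (hmix s hs t ht h1 h2 heq).elim
        · exact (hmix t ht s hs h2 h1 heq.symm).elim
        · have e1 := hdistx s hs
          have e2 := hdistx t ht
          rw [if_neg h1] at e1
          rw [if_neg h2] at e2
          have : c + (s - l1) = c + (t - l1) := by rw [← e1, ← e2, heq]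
          linarith
      have hG0 : Gm 0 = f1 u := by
        show (if (0:ℝ) ≤ l1 then f1 (u - 0) else f2 (c + (0 - l1))) = f1 u
        rw [if_pos hl1, sub_zero]
      have hGL : Gm L = f2 v := by
        show (if L ≤ l1 then f1 (u - L) else f2 (c + (L - l1))) = f2 v
        by_cases h : L ≤ l1
        · have hl2' : l2 = 0 := by rw [hLdef] at h; linarith
          have hv' : v = c := by rw [hl2def] at hl2'; linarith
          rw [if_pos h]
          have h5 : u - L = c := by rw [hLdef, hl1def, hl2']; ring
          rw [h5, hfc, hv']
        · rw [if_neg h]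
          have h5 : c + (L - l1) = v := by rw [hLdef, hl2def]; ring
          rw [h5]
      have hGl1 : Gm l1 = f1 c := by
        show (if l1 ≤ l1 then f1 (u - l1) else f2 (c + (l1 - l1))) = f1 c
        rw [if_pos (le_refl l1)]
        have h5 : u - l1 = c := by rw [hl1def]; ring
        rw [h5]
      have harc1 : IsArcBetween (f1 u) (f2 v) (Gm '' Set.Icc 0 L) :=
        isArcBetween_of_param hLpos hlip hinj hG0 hGL
      obtain ⟨f3, hf3⟩ := exists_geodLike hT (f1 u) (f2 v)
      set D3 := dist (f1 u) (f2 v) with hD3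
      have hD3pos : 0 < D3 := by
        rcases eq_or_lt_of_le (dist_nonneg : (0:ℝ) ≤ D3) with h0 | h
        · exfalso
          have heq2 : f1 u = f2 v := dist_eq_zero.1 h0.symm
          have hu2 : dist x (f1 u) = u := hf1.dist_from_left huIcc
          have hv2 : dist x (f2 v) = v := hf2.dist_from_left hvIcc
          have huv : u = v := by rw [← hu2, ← hv2, heq2]
          have huS : u ∈ S := by
            refine ⟨⟨by linarith, le_min hu.2 (by rw [huv]; exact hv.2)⟩, ?_⟩
            rw [heq2, huv]
          have h6 : u ≤ c := le_csSup hbdd huS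
          have h7 : u = c := le_antisymm h6 hu.1
          have h8 : v = c := by rw [← huv]; exact h7
          have h9 : L = 0 := by rw [hLdef, hl1def, hl2def, h7, h8]; ring
          linarith
        · exact h
      have harc2 : IsArcBetween (f1 u) (f2 v) (f3 '' Set.Icc 0 D3) := hf3.arc hD3pos
      have himg := hT.2 _ _ _ _ harc1 harc2
      have hmmem : f1 c ∈ f3 '' Set.Icc 0 D3 := by
        rw [← himg]
        exact ⟨l1, ⟨hl1, by rw [hLdef]; linarith⟩, hGl1⟩
      obtain ⟨s3, hs3, hs3eq⟩ := hmmem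
      have e1 : dist (f1 u) (f3 s3) = s3 := hf3.dist_from_left hs3
      have e2 : dist (f3 s3) (f2 v) = D3 - s3 := hf3.dist_to_right hs3
      have e3 : dist (f1 u) (f1 c) = l1 := by
        rw [hf1.2.2 u huIcc c ⟨hc0, hc1⟩, abs_of_nonneg (by linarith), hl1def]
      have e4 : dist (f1 c) (f2 v) = l2 := by
        rw [hfc, hf2.2.2 c ⟨hc0, hc2⟩ v hvIcc, abs_of_nonpos (by linarith), hl2def]
        ring
      rw [hs3eq] at e1 e2
      rw [e3] at e1
      rw [e4] at e2
      linarith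
  refine ⟨f1 c, ?_, ?_, ?_⟩
  · rw [seg_eq_image hT hf1]
    exact ⟨c, ⟨hc0, hc1⟩, rfl⟩
  · rw [seg_eq_image hT hf2]
    exact ⟨c, ⟨hc0, hc2⟩, hfc.symm⟩
  · show dist y (f1 c) + dist (f1 c) z = dist y z
    have h1 : dist (f1 c) y = D1 - c := hf1.dist_to_right ⟨hc0, hc1⟩
    have h2 : dist (f1 c) z = D2 - c := by
      rw [hfc]
      exact hf2.dist_to_right ⟨hc0, hc2⟩
    have h3 := hdiv D1 ⟨hc1, le_refl _⟩ D2 ⟨hc2, le_refl _⟩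
    rw [hf1.2.1, hf2.2.1] at h3
    rw [dist_comm y (f1 c), h1, h2, h3]

/-! ### Gates (closest-point projections) -/

def IsGate (A : Set T) (z p : T) : Prop :=
  p ∈ A ∧ ∀ c ∈ A, dist z c = dist z p + dist p c

lemma IsGate.infDist {A : Set T} {z p : T} (h : IsGate A z p) :
    Metric.infDist z A = dist z p := by
  haveI : Nonempty A := ⟨⟨p, h.1⟩⟩
  refine le_antisymm (Metric.infDist_le_dist_of_mem h.1) ?_
  rw [Metric.infDist_eq_iInf]
  refine le_ciInf fun c => ?_
  rw [h.2 c c.2]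
  linarith [dist_nonneg (x := p) (y := (c : T))]

lemma isometry_range_convex (hT : IsRealTree T) {f : ℝ → T} (hf : Isometry f) {u v : T}
    (hu : u ∈ Set.range f) (hv : v ∈ Set.range f) : seg u v ⊆ Set.range f := by
  obtain ⟨s, rfl⟩ := hu
  obtain ⟨t, rfl⟩ := hv
  rcases le_total s t with h | h
  · have hG : GeodLike (fun r => f (s + r)) (f s) (f t) := by
      refine ⟨by show f (s + 0) = f s; rw [add_zero], ?_, ?_⟩
      · have hd : dist (f s) (f t) = t - s := by
          rw [hf.dist_eq, Real.dist_eq, abs_of_nonpos (by linarith)]; ring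
        rw [hd]; congr 1; ring
      · intro a _ b _
        rw [hf.dist_eq, Real.dist_eq]
        congr 1; ring
    rw [seg_eq_image hT hG]
    rintro z ⟨r, _, rfl⟩
    exact ⟨s + r, rfl⟩
  · have hG : GeodLike (fun r => f (s - r)) (f s) (f t) := by
      refine ⟨by show f (s - 0) = f s; rw [sub_zero], ?_, ?_⟩
      · have hd : dist (f s) (f t) = s - t := by
          rw [hf.dist_eq, Real.dist_eq, abs_of_nonneg (by linarith)]
        rw [hd]; congr 1; ring
      · intro a _ b _
        rw [hf.dist_eq, Real.dist_eq]
        rw [show s - a - (s - b) = -(a - b) by ring, abs_neg]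
    rw [seg_eq_image hT hG]
    rintro z ⟨r, _, rfl⟩
    exact ⟨s - r, rfl⟩

lemma exists_gate_range (hT : IsRealTree T) {f : ℝ → T} (hf : Isometry f) (z : T) :
    ∃ p, IsGate (Set.range f) z p := by
  set φ : ℝ → ℝ := fun t => dist z (f t) with hφ
  have hφcont : Continuous φ := continuous_const.dist hf.continuous
  set k := dist z (f 0) with hk
  have hk0 : 0 ≤ k := dist_nonneg
  set M := 2 * k + 1 with hM
  have h0mem : (0:ℝ) ∈ Set.Icc (-M) M := ⟨by linarith, by linarith⟩
  obtain ⟨t₀, ht₀mem, ht₀min⟩ :=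
    isCompact_Icc.exists_isMinOn ⟨0, h0mem⟩ hφcont.continuousOn
  have hφlb : ∀ t : ℝ, |t| - k ≤ φ t := by
    intro t
    have h1 : dist (f 0) (f t) = |t| := by
      rw [hf.dist_eq, Real.dist_eq]
      rw [show (0:ℝ) - t = -t by ring, abs_neg]
    have := dist_triangle (f 0) z (f t)
    rw [h1, dist_comm (f 0) z] at this
    simp only [hφ, hk]
    linarith
  have hmin : ∀ t : ℝ, φ t₀ ≤ φ t := by
    intro t
    by_cases h : t ∈ Set.Icc (-M) M
    · exact ht₀min h
    · have habs : M < |t| := by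
        simp only [Set.mem_Icc, not_and_or, not_le] at h
        rcases h with h | h
        · rw [abs_of_neg (by linarith)]; linarith
        · rw [abs_of_pos (by linarith)]; linarith
      have h1 : φ t₀ ≤ k := ht₀min h0mem
      have h2 := hφlb t
      simp only [hM] at habs
      linarith
  refine ⟨f t₀, mem_range_self _, ?_⟩
  intro c hc
  obtain ⟨s, rfl⟩ := hc
  obtain ⟨m, hm1, hm2, hm3⟩ := exists_median hT z (f t₀) (f s)
  have hmrange : m ∈ Set.range f :=
    isometry_range_convex hT hf (Set.mem_range_self t₀) (Set.mem_range_self s) hm3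
  obtain ⟨r, rfl⟩ := hmrange
  have hge : dist z (f t₀) ≤ dist z (f r) := hmin r
  have he1 : dist z (f r) + dist (f r) (f t₀) = dist z (f t₀) := hm1
  have hzero : dist (f r) (f t₀) = 0 := by
    linarith [dist_nonneg (x := f r) (y := f t₀)]
  have hmp : f r = f t₀ := dist_eq_zero.1 hzero
  have he2 : dist z (f r) + dist (f r) (f s) = dist z (f s) := hm2
  rw [hmp] at he2
  linarith

/-- The fundamental "two gates" lemma in a real tree. -/
lemma two_gate (hT : IsRealTree T) {A : Set T}
    (hconv : ∀ u ∈ A, ∀ v ∈ A, seg u v ⊆ A)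
    {z1 z2 γ1 γ2 : T} (h1 : IsGate A z1 γ1) (h2 : IsGate A z2 γ2) (hne : γ1 ≠ γ2) :
    dist z1 z2 = dist z1 γ1 + dist γ1 γ2 + dist γ2 z2 := by
  obtain ⟨m, hm1, hm2, hm3⟩ := exists_median hT z1 γ1 z2
  have hm1' : dist z1 m + dist m γ1 = dist z1 γ1 := hm1
  have hm2' : dist z1 m + dist m z2 = dist z1 z2 := hm2
  have hm3' : dist γ1 m + dist m z2 = dist γ1 z2 := hm3
  have hγ2seg : γ2 ∈ seg γ1 z2 := by
    show dist γ1 γ2 + dist γ2 z2 = dist γ1 z2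
    have := h2.2 γ1 h1.1
    rw [dist_comm γ1 γ2, dist_comm γ1 z2, dist_comm γ2 z2]
    linarith
  have hg : dist γ1 γ2 + dist γ2 z2 = dist γ1 z2 := hγ2seg
  by_cases hcase : dist γ1 m ≤ dist γ1 γ2
  · have hmseg : m ∈ seg γ1 γ2 := seg_ordered hT hm3 hγ2seg hcase
    have hmA : m ∈ A := hconv γ1 h1.1 γ2 h2.1 hmseg
    have e1 := h1.2 m hmA
    have hcm : dist m γ1 = dist γ1 m := dist_comm _ _
    have hm0 : dist γ1 m = 0 := by linarith
    have hmeq : m = γ1 := dist_eq_zero.1 (by rw [hcm, hm0])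
    rw [hmeq] at hm2'
    linarith
  · exfalso
    push_neg at hcase
    have hγ2m : γ2 ∈ seg γ1 m := seg_ordered hT hγ2seg hm3 hcase.le
    have hγ2m' : dist γ1 γ2 + dist γ2 m = dist γ1 m := hγ2m
    have htri : dist γ2 z1 ≤ dist γ2 m + dist m z1 := dist_triangle _ _ _
    have hgate := h1.2 γ2 h2.1
    have c1 : dist m γ1 = dist γ1 m := dist_comm _ _
    have c2 : dist γ2 z1 = dist z1 γ2 := dist_comm _ _
    have c3 : dist m z1 = dist z1 m := dist_comm _ _
    have hd0 : 0 < dist γ1 γ2 := dist_pos.2 hne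
    linarith

end RealTreeAux


section CharSetAux

variable {G : Type*} [Group G] {T : Type*} [MetricSpace T]

lemma charSet_self_inv (ρ : G →* (T ≃ᵢ T)) (k : G) (c : T) :
    c ∈ charSet ρ k ↔ ρ k c ∈ charSet ρ k := by
  have hd : dist (ρ k c) (ρ k (ρ k c)) = dist c (ρ k c) := (ρ k).dist_eq c (ρ k c)
  constructor
  · intro hc
    show dist (ρ k c) (ρ k (ρ k c)) = transLen ρ k
    rw [hd]; exact hc
  · intro hc
    have : dist (ρ k c) (ρ k (ρ k c)) = transLen ρ k := hc
    show dist c (ρ k c) = transLen ρ k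
    rw [← hd]; exact this

lemma gate_map {A : Set T} {φ : T ≃ᵢ T} (hA : ∀ c, c ∈ A ↔ φ c ∈ A) {z p : T}
    (h : IsGate A z p) : IsGate A (φ z) (φ p) := by
  refine ⟨(hA p).1 h.1, fun c hc => ?_⟩
  have hc' : φ.symm c ∈ A := (hA (φ.symm c)).2 (by simpa using hc)
  have key := h.2 (φ.symm c) hc'
  have e1 : dist (φ z) c = dist z (φ.symm c) := by
    conv_lhs => rw [← φ.apply_symm_apply c]
    exact φ.dist_eq _ _
  have e2 : dist (φ p) c = dist p (φ.symm c) := by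
    conv_lhs => rw [← φ.apply_symm_apply c]
    exact φ.dist_eq _ _
  have e3 : dist (φ z) (φ p) = dist z p := φ.dist_eq _ _
  rw [e1, e2, e3]
  exact key

/-- For a loxodromic element, the translation length is positive and the
characteristic set is the axis (in particular an isometric copy of `ℝ`). -/
lemma loxodromic_charSet (hT : IsRealTree T) {ρ : G →* (T ≃ᵢ T)} {g : G}
    (hg : Loxodromic ρ g) :
    0 < transLen ρ g ∧ ∃ f : ℝ → T, Isometry f ∧ Set.range f = charSet ρ g := by
  obtain ⟨A, ⟨⟨f, hfiso, hfrange⟩, hinv, τ, hτpos, hτ⟩⟩ := hg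
  subst hfrange
  haveI : Nonempty T := ⟨f 0⟩
  have hAconv : ∀ u ∈ Set.range f, ∀ v ∈ Set.range f, seg u v ⊆ Set.range f :=
    fun u hu v hv => isometry_range_convex hT hfiso hu hv
  have hgate : ∀ z : T, ∃ p, IsGate (Set.range f) z p := exists_gate_range hT hfiso
  have hAinv' : ∀ c, c ∈ Set.range f ↔ ρ g c ∈ Set.range f := hinv
  have hdisp : ∀ z p, IsGate (Set.range f) z p →
      dist z (ρ g z) = τ + 2 * dist z p := by
    intro z p hp
    have hp' : IsGate (Set.range f) (ρ g z) (ρ g p) := gate_map hAinv' hp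
    have hne : p ≠ ρ g p := by
      intro hEq
      have h1 := hτ p hp.1
      rw [← hEq, dist_self] at h1
      linarith
    have h2g := two_gate hT hAconv hp hp' hne
    have h3 : dist p (ρ g p) = τ := hτ p hp.1
    have h4 : dist (ρ g p) (ρ g z) = dist p z := (ρ g).dist_eq p z
    have h5 : dist p z = dist z p := dist_comm _ _
    rw [h3, h4, h5] at h2g
    linarith
  have hbdd : BddBelow (Set.range fun z : T => dist z (ρ g z)) := by
    refine ⟨0, ?_⟩
    rintro r ⟨w, rfl⟩
    exact dist_nonneg
  have htrans : transLen ρ g = τ := by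
    apply le_antisymm
    · have h1 : dist (f 0) (ρ g (f 0)) = τ := hτ _ (Set.mem_range_self 0)
      calc transLen ρ g ≤ dist (f 0) (ρ g (f 0)) := ciInf_le hbdd (f 0)
        _ = τ := h1
    · refine le_ciInf fun z => ?_
      obtain ⟨p, hp⟩ := hgate z
      rw [hdisp z p hp]
      linarith [dist_nonneg (x := z) (y := p)]
  constructor
  · rw [htrans]; exact hτpos
  · refine ⟨f, hfiso, ?_⟩
    ext w
    constructor
    · rintro ⟨t, rfl⟩
      show dist (f t) (ρ g (f t)) = transLen ρ g
      rw [htrans]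
      exact hτ _ (Set.mem_range_self t)
    · intro hw
      have hw' : dist w (ρ g w) = transLen ρ g := hw
      obtain ⟨p, hp⟩ := hgate w
      have := hdisp w p hp
      rw [hw', htrans] at this
      have hzero : dist w p = 0 := by linarith
      have : w = p := dist_eq_zero.1 hzero
      rw [this]
      exact hp.1

end CharSetAux


/-- If the projections of the axes of `h` and `h'` onto the axis of `g` are at distance
greater than the translation length of `g`, then the characteristic set of `g * h` is
disjoint from the axis of `h'`. -/
theorem charSet_mul_disjoint_of_far_projections
    (G : Type*) [Group G] (T : Type*) [MetricSpace T] (hT : IsRealTree T)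
    (ρ : G →* (T ≃ᵢ T)) (g h h' : G)
    (hg : Loxodromic ρ g) (hh : Loxodromic ρ h) (hh' : Loxodromic ρ h')
    (hfar : ∃ d : ℝ, transLen ρ g < d ∧
      ∀ y ∈ projSet (charSet ρ h) (charSet ρ g),
        ∀ y' ∈ projSet (charSet ρ h') (charSet ρ g), d ≤ dist y y') :
    charSet ρ (g * h) ∩ charSet ρ h' = ∅ := by
  rw [Set.eq_empty_iff_forall_notMem]
  rintro x ⟨hxGH, hxH'⟩
  obtain ⟨d, hd1, hd2⟩ := hfar
  have hcomp : ∀ (a b : G) (z : T), ρ a (ρ b z) = ρ (a * b) z := fun a b z => by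
    rw [map_mul]; rfl
  have hGinv : ∀ z : T, ρ g (ρ g⁻¹ z) = z := fun z => by
    rw [hcomp]; simp
  have hGinv' : ∀ z : T, ρ g⁻¹ (ρ g z) = z := fun z => by
    rw [hcomp]; simp
  obtain ⟨hτpos, fg, hfg_iso, hfg_range⟩ := loxodromic_charSet hT hg
  obtain ⟨hσpos, fh, hfh_iso, hfh_range⟩ := loxodromic_charSet hT hh
  set A := charSet ρ g with hA
  set B := charSet ρ h with hB
  set τ := transLen ρ g with hτ
  set σ := transLen ρ h with hσ
  have hAconv : ∀ u ∈ A, ∀ v ∈ A, seg u v ⊆ A := by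
    rw [← hfg_range]
    exact fun u hu v hv => isometry_range_convex hT hfg_iso hu hv
  have hBconv : ∀ u ∈ B, ∀ v ∈ B, seg u v ⊆ B := by
    rw [← hfh_range]
    exact fun u hu v hv => isometry_range_convex hT hfh_iso hu hv
  have hAgate : ∀ z : T, ∃ p, IsGate A z p := by
    rw [← hfg_range]
    exact exists_gate_range hT hfg_iso
  have hBgate : ∀ z : T, ∃ p, IsGate B z p := by
    rw [← hfh_range]
    exact exists_gate_range hT hfh_iso
  have hAinvg : ∀ c, c ∈ A ↔ ρ g c ∈ A := charSet_self_inv ρ g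
  have hAinvg' : ∀ c, c ∈ A ↔ ρ g⁻¹ c ∈ A := by
    intro c
    constructor
    · intro hc
      have := (hAinvg (ρ g⁻¹ c))
      rw [hGinv c] at this
      exact this.2 hc
    · intro hc
      have := (hAinvg (ρ g⁻¹ c)).1 hc
      rwa [hGinv c] at this
  have hBinvh : ∀ c, c ∈ B ↔ ρ h c ∈ B := charSet_self_inv ρ h
  -- gate of x on A
  obtain ⟨q, hq⟩ := hAgate x
  have ha0 : 0 ≤ dist x q := dist_nonneg
  have hqProj : q ∈ projSet (charSet ρ h') A := ⟨hq.1, x, hxH', hq.infDist.symm⟩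
  have hfarq : ∀ u ∈ projSet B A, d ≤ dist q u := by
    intro u hu
    have := hd2 u hu q hqProj
    rwa [dist_comm] at this
  have hprojB : ∀ w ∈ B, ∀ p', IsGate A w p' → p' ∈ projSet B A := by
    intro w hw p' hp'
    exact ⟨hp'.1, w, hw, hp'.infDist.symm⟩
  obtain ⟨w₀, hw₀⟩ := hBgate q
  obtain ⟨p, hp⟩ := hAgate w₀
  have hpProj : p ∈ projSet B A := hprojB w₀ hw₀.1 p hp
  have hdqp : d ≤ dist q p := hfarq p hpProj
  -- the point α = g⁻¹ q
  have hαgate : IsGate A (ρ g⁻¹ x) (ρ g⁻¹ q) :=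
    gate_map (φ := ρ g⁻¹) hAinvg' hq
  have hαA : ρ g⁻¹ q ∈ A := hαgate.1
  have hqd : dist q (ρ g q) = τ := hq.1
  have hpd : dist p (ρ g p) = τ := hp.1
  have hqα : dist q (ρ g⁻¹ q) = τ := by
    have h1 : dist q (ρ g⁻¹ q) = dist (ρ g q) (ρ g (ρ g⁻¹ q)) := ((ρ g).dist_eq _ _).symm
    rw [hGinv q] at h1
    rw [h1, dist_comm]
    exact hqd
  have hαp : d - τ ≤ dist (ρ g⁻¹ q) p := by
    have htri := dist_triangle q (ρ g⁻¹ q) p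
    linarith
  have hτd : 0 < d := lt_trans hτpos hd1
  -- chain dist q w₀
  have hqw₀ : dist q w₀ = dist q p + dist p w₀ := by
    have := hp.2 q hq.1
    rw [dist_comm w₀ q, dist_comm w₀ p] at this
    linarith [dist_comm p q]
  -- gate of α on B is w₀
  obtain ⟨w₁, hw₁⟩ := hBgate (ρ g⁻¹ q)
  have hw₁w₀ : w₁ = w₀ := by
    by_contra hne
    have h2g := two_gate hT hBconv hw₁ hw₀ hne
    -- dist (ρ g⁻¹ q) q = dist (ρ g⁻¹ q) w₁ + dist w₁ w₀ + dist w₀ q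
    have h3 : dist (ρ g⁻¹ q) q = τ := by rw [dist_comm]; exact hqα
    have h4 : 0 ≤ dist (ρ g⁻¹ q) w₁ := dist_nonneg
    have h5 : 0 ≤ dist w₁ w₀ := dist_nonneg
    have h6 : dist w₀ q = dist q w₀ := dist_comm _ _
    have h7 : 0 ≤ dist p w₀ := dist_nonneg
    rw [h3, h6, hqw₀] at h2g
    linarith
  rw [hw₁w₀] at hw₁
  -- master formulas for x and g⁻¹x against points of B
  have hxB : ∀ b' ∈ B, dist x b' = dist x q + dist q b' := by
    intro b' hb'
    obtain ⟨u, hu⟩ := hAgate b'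
    have hqu : d ≤ dist q u := hfarq u (hprojB b' hb' u hu)
    have hqune : q ≠ u := by
      intro hEq
      rw [hEq, dist_self] at hqu
      linarith
    have h2g := two_gate hT hAconv hq hu hqune
    have h8 := hu.2 q hq.1
    rw [dist_comm b' q, dist_comm b' u] at h8
    linarith [dist_comm u q]
  have hαB : ∀ b' ∈ B, dist (ρ g⁻¹ x) b' = dist x q + dist (ρ g⁻¹ q) b' := by
    intro b' hb'
    obtain ⟨u, hu⟩ := hAgate b'
    have hqu : d ≤ dist q u := hfarq u (hprojB b' hb' u hu)
    have hαune : ρ g⁻¹ q ≠ u := by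
      intro hEq
      rw [← hEq, hqα] at hqu
      linarith
    have h2g := two_gate hT hAconv hαgate hu hαune
    have hda : dist (ρ g⁻¹ x) (ρ g⁻¹ q) = dist x q := (ρ g⁻¹).dist_eq x q
    have h8 := hu.2 (ρ g⁻¹ q) hαA
    rw [dist_comm b' (ρ g⁻¹ q), dist_comm b' u] at h8
    rw [hda] at h2g
    linarith [dist_comm u (ρ g⁻¹ q)]
  -- w₀ is a gate of x and of g⁻¹x on B
  have hgx : IsGate B x w₀ := by
    refine ⟨hw₀.1, fun b' hb' => ?_⟩
    rw [hxB b' hb', hxB w₀ hw₀.1, hw₀.2 b' hb']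
    ring
  have hgα : IsGate B (ρ g⁻¹ x) w₀ := by
    refine ⟨hw₀.1, fun b' hb' => ?_⟩
    rw [hαB b' hb', hαB w₀ hw₀.1, hw₁.2 b' hb']
    ring
  have hgHx : IsGate B (ρ h x) (ρ h w₀) := gate_map (φ := ρ h) hBinvh hgx
  have hw₀σ : dist w₀ (ρ h w₀) = σ := hw₀.1
  have hw₀Hw₀ : w₀ ≠ ρ h w₀ := by
    intro hEq
    rw [← hEq, dist_self] at hw₀σ
    linarith
  have hMain := two_gate hT hBconv hgα hgHx hw₀Hw₀
  -- numerical identities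
  have e1 : dist (ρ g⁻¹ x) w₀ = dist x q + dist (ρ g⁻¹ q) w₀ := hαB w₀ hw₀.1
  have e2 : dist (ρ h w₀) (ρ h x) = dist w₀ x := (ρ h).dist_eq w₀ x
  have e3 : dist x w₀ = dist x q + dist q w₀ := hxB w₀ hw₀.1
  have e4 : dist (ρ g⁻¹ q) w₀ = dist (ρ g⁻¹ q) p + dist p w₀ := by
    have := hp.2 (ρ g⁻¹ q) hαA
    rw [dist_comm w₀ (ρ g⁻¹ q), dist_comm w₀ p] at this
    linarith [dist_comm p (ρ g⁻¹ q)]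
  have e5 : dist w₀ x = dist x w₀ := dist_comm _ _
  -- upper bound for displacement of p under gh
  have hKp : dist (ρ g⁻¹ p) (ρ h p) ≤ τ + σ + 2 * dist p w₀ := by
    have t1 : dist (ρ g⁻¹ p) p = τ := by
      have h1 : dist (ρ g⁻¹ p) p = dist (ρ g (ρ g⁻¹ p)) (ρ g p) := ((ρ g).dist_eq _ _).symm
      rw [hGinv p] at h1
      rw [h1]
      exact hpd
    have t2 : dist (ρ h w₀) (ρ h p) = dist w₀ p := (ρ h).dist_eq _ _
    have htr1 := dist_triangle (ρ g⁻¹ p) p (ρ h p)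
    have htr2 := dist_triangle p w₀ (ρ h p)
    have htr3 := dist_triangle w₀ (ρ h w₀) (ρ h p)
    have hcw : dist w₀ p = dist p w₀ := dist_comm _ _
    rw [t1] at htr1
    rw [t2, hcw] at htr3
    rw [hw₀σ] at htr3
    linarith
  -- displacement identities under gh
  have hDx : dist x (ρ (g * h) x) = dist (ρ g⁻¹ x) (ρ h x) := by
    have h1 : ρ (g * h) x = ρ g (ρ h x) := (hcomp g h x).symm
    rw [h1]
    have h2 : dist (ρ g⁻¹ x) (ρ h x) = dist (ρ g (ρ g⁻¹ x)) (ρ g (ρ h x)) :=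
      ((ρ g).dist_eq _ _).symm
    rw [hGinv x] at h2
    exact h2.symm
  have hDp : dist p (ρ (g * h) p) = dist (ρ g⁻¹ p) (ρ h p) := by
    have h1 : ρ (g * h) p = ρ g (ρ h p) := (hcomp g h p).symm
    rw [h1]
    have h2 : dist (ρ g⁻¹ p) (ρ h p) = dist (ρ g (ρ g⁻¹ p)) (ρ g (ρ h p)) :=
      ((ρ g).dist_eq _ _).symm
    rw [hGinv p] at h2
    exact h2.symm
  have hxmin : dist x (ρ (g * h) x) = transLen ρ (g * h) := hxGH
  have hbddGH : BddBelow (Set.range fun z : T => dist z (ρ (g * h) z)) := by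
    refine ⟨0, ?_⟩
    rintro r ⟨w, rfl⟩
    exact dist_nonneg
  have hle : transLen ρ (g * h) ≤ dist p (ρ (g * h) p) := ciInf_le hbddGH p
  have hfinal1 : 0 ≤ dist p w₀ := dist_nonneg
  -- put everything together
  rw [hDx] at hxmin
  rw [hDp] at hle
  rw [hMain, e1, e2, e5, e3, e4, hqw₀, hw₀σ] at hxmin
  linarith
end
end
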